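/- arXiv:2306.08412 — 6 statements merged into one kernel-verified Lean document; each statement's English description precedes it below -/
import Mathlib

section
/- Let n ≥ 2 and k ≥ 2 be positive integers with k ≥ 2n - 3 + ⌊(n-1)/4⌋. If k = a₁ + a₂ + ⋯ + a_t where n - 1 ≥ a₁ ≥ a₂ ≥ ⋯ ≥ a_t ≥ 1, then the numbers a₁, a₂, …, a_t can be partitioned into three groups such that the sum of each group is at least ⌈n/4⌉, or into two groups such that the sum of each group is at least n - 2. -/
/-- The spanning subgraph of the complete graph on `Fin N` formed by the edges of color `i`
under the 2-edge-coloring `C` (colors are booleans). -/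
def colorGraph {N : ℕ} (C : Sym2 (Fin N) → Bool) (i : Bool) : SimpleGraph (Fin N) where
  Adj u v := u ≠ v ∧ C s(u, v) = i
  symm := by
    constructor
    intro u v h
    exact ⟨h.1.symm, by rw [Sym2.eq_swap]; exact h.2⟩
  loopless := by
    constructor
    intro u h
    exact h.1 rfl

/-- `S` is a monochromatic copy of `K_r` in color `i`. -/
def IsMonoClique {N : ℕ} (C : Sym2 (Fin N) → Bool) (i : Bool) (r : ℕ)
    (S : Finset (Fin N)) : Prop :=
  S.card = r ∧ ∀ u ∈ S, ∀ v ∈ S, u ≠ v → C s(u, v) = i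

/-- The coloring `C` contains `n` pairwise vertex-disjoint copies of `K_r` in color `i`. -/
def HasMonoCliqueMatching {N : ℕ} (C : Sym2 (Fin N) → Bool) (i : Bool) (n r : ℕ) : Prop :=
  ∃ f : Fin n → Finset (Fin N),
    (∀ j, IsMonoClique C i r (f j)) ∧
    ∀ j l, j ≠ l → Disjoint (f j) (f l)

/-- The coloring `C` contains a monochromatic connected `nK_r`-matching: `n` pairwise
vertex-disjoint copies of `K_r` in some color `i`, all of whose vertices lie in one
connected component of the spanning subgraph of color `i`. -/
def HasConnCliqueMatching {N : ℕ} (C : Sym2 (Fin N) → Bool) (n r : ℕ) : Prop :=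
  ∃ i : Bool, ∃ f : Fin n → Finset (Fin N),
    (∀ j, IsMonoClique C i r (f j)) ∧
    (∀ j l, j ≠ l → Disjoint (f j) (f l)) ∧
    ∀ u v : Fin N, (∃ j, u ∈ f j) → (∃ j, v ∈ f j) → (colorGraph C i).Reachable u v

/-- The coloring `C` contains a copy (as a subgraph) of `G` all of whose edges have color `i`. -/
def HasMonoCopy {N : ℕ} {V : Type*} (C : Sym2 (Fin N) → Bool) (i : Bool)
    (G : SimpleGraph V) : Prop :=
  ∃ f : V ↪ Fin N, ∀ u v : V, G.Adj u v → C s(f u, f v) = i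

/-- **Lemma 2 (partition lemma).** Let `n ≥ 2` and `k ≥ 2` with `k ≥ 2n - 3 + ⌊(n-1)/4⌋`.
If `k = a₀ + a₁ + ⋯ + a_{t-1}` where `n - 1 ≥ a₀ ≥ a₁ ≥ ⋯ ≥ a_{t-1} ≥ 1`, then the `aᵢ`
can be partitioned into three nonempty groups each of sum at least `⌈n/4⌉`, or into two
nonempty groups each of sum at least `n - 2`. -/
theorem partition_lemma (n k t : ℕ) (hn : 2 ≤ n) (hk2 : 2 ≤ k)
    (hk : 2 * n - 3 + (n - 1) / 4 ≤ k)
    (ht : 1 ≤ t) (a : ℕ → ℕ)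
    (hsum : ∑ i ∈ Finset.range t, a i = k)
    (hmono : ∀ i j, i ≤ j → j < t → a j ≤ a i)
    (hub : a 0 ≤ n - 1)
    (hlb : ∀ i, i < t → 1 ≤ a i) :
    (∃ g : ℕ → Fin 3,
        (∀ j : Fin 3, ∃ i, i < t ∧ g i = j) ∧
        ∀ j : Fin 3, (n + 3) / 4 ≤ ∑ i ∈ (Finset.range t).filter (fun i => g i = j), a i) ∨
    (∃ g : ℕ → Fin 2,
        (∀ j : Fin 2, ∃ i, i < t ∧ g i = j) ∧
        ∀ j : Fin 2, n - 2 ≤ ∑ i ∈ (Finset.range t).filter (fun i => g i = j), a i) := by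
  classical
  set q : ℕ := (n + 3) / 4 with hq
  set s : ℕ → ℕ := fun m => ∑ i ∈ Finset.range m, a i with hs
  have hst : s t = k := hsum
  have hsmono : Monotone s := fun m m' h =>
    Finset.sum_le_sum_of_subset (Finset.range_subset_range.2 h)
  have hssucc : ∀ m, s (m + 1) = s m + a m := fun m => Finset.sum_range_succ a m
  have hs0 : s 0 = 0 := rfl
  have hs1 : s 1 = a 0 := by
    have h := hssucc 0
    rw [hs0] at h
    simp only [Nat.zero_add] at h
    exact h
  have hsplit : ∀ m m', m ≤ m' → s m + ∑ l ∈ Finset.Ico m m', a l = s m' := by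
    intro m m' h
    have h2 := Finset.sum_Ico_consecutive a (Nat.zero_le m) h
    simp only [Nat.Ico_zero_eq_range] at h2
    exact h2
  have ha01 : 1 ≤ a 0 := hlb 0 (by omega)
  have ht2 : 2 ≤ t := by
    by_contra h
    have h1 : t = 1 := by omega
    subst h1
    have : a 0 = k := by simpa using hsum
    omega
  by_cases hbig : n - 2 ≤ a 0
  · -- two groups: {0} and the rest
    right
    refine ⟨fun l => if l = 0 then 0 else 1, ?_, ?_⟩
    · intro c
      rcases (by decide : ∀ c : Fin 2, c = 0 ∨ c = 1) c with rfl | rfl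
      · exact ⟨0, by omega, by simp⟩
      · exact ⟨1, by omega, by simp⟩
    · have hF0 : (Finset.range t).filter
          (fun l => (if l = 0 then (0 : Fin 2) else 1) = 0) = {0} := by
        ext l
        simp only [Finset.mem_filter, Finset.mem_range, Finset.mem_singleton]
        constructor
        · rintro ⟨hl, h2⟩
          by_contra hc
          rw [if_neg hc] at h2
          exact absurd h2 (by decide)
        · rintro rfl
          exact ⟨by omega, by simp⟩
      have hF1 : (Finset.range t).filter
          (fun l => (if l = 0 then (0 : Fin 2) else 1) = 1) = (Finset.range t).erase 0 := by
        ext l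
        simp only [Finset.mem_filter, Finset.mem_range, Finset.mem_erase]
        constructor
        · rintro ⟨hl, h2⟩
          refine ⟨?_, hl⟩
          rintro rfl
          rw [if_pos rfl] at h2
          exact absurd h2 (by decide)
        · rintro ⟨hne, hl⟩
          exact ⟨hl, by rw [if_neg hne]⟩
      have hsum1 : a 0 + ∑ l ∈ (Finset.range t).erase 0, a l = k := by
        rw [Finset.add_sum_erase _ a (Finset.mem_range.2 (by omega))]
        exact hsum
      intro c
      rcases (by decide : ∀ c : Fin 2, c = 0 ∨ c = 1) c with rfl | rfl
      · rw [hF0]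
        simpa using hbig
      · rw [hF1]
        omega
  · -- three groups, greedy prefixes
    have ha0 : a 0 + 2 ≤ n - 1 := by omega
    have hn4 : 4 ≤ n := by omega
    have hkq : 2 * (n - 2) + q ≤ k := by omega
    have hq1 : 1 ≤ q := by omega
    have hex1 : ∃ m, q ≤ s m := ⟨t, by omega⟩
    set i := Nat.find hex1 with hi
    have hqi : q ≤ s i := Nat.find_spec hex1
    have hile : i ≤ t := Nat.find_le (by omega : q ≤ s t)
    have hi1 : 1 ≤ i := by
      rcases Nat.eq_zero_or_pos i with h | h
      · rw [h] at hqi; omega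
      · exact h
    have himin : ∀ m, m < i → s m < q := by
      intro m hm
      have := Nat.find_min hex1 hm
      omega
    have hsi : s i ≤ n - 3 ∨ s i + 2 ≤ 2 * q := by
      rcases eq_or_lt_of_le hi1 with h | h
      · left
        rw [← h, hs1]
        omega
      · right
        have e1 : s i = s (i - 1) + a (i - 1) := by
          have e : i - 1 + 1 = i := by omega
          rw [← e, hssucc, e]
        have h1 : a (i - 1) ≤ a (i - 2) := hmono (i - 2) (i - 1) (by omega) (by omega)
        have h2 : a (i - 2) ≤ s (i - 1) :=
          Finset.single_le_sum (f := a) (fun _ _ => Nat.zero_le _)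
            (Finset.mem_range.2 (by omega))
        have h3 : s (i - 1) < q := himin _ (by omega)
        omega
    have hsit : s i + q ≤ s t := by omega
    have hex2 : ∃ m, s i + q ≤ s m := ⟨t, hsit⟩
    set j := Nat.find hex2 with hj
    have hqj : s i + q ≤ s j := Nat.find_spec hex2
    have hjle : j ≤ t := Nat.find_le hsit
    have hij : i < j := by
      by_contra h
      push_neg at h
      have := hsmono h
      omega
    have hjmin : ∀ m, m < j → s m < s i + q := by
      intro m hm
      have := Nat.find_min hex2 hm
      omega
    have hsj : s j ≤ s i + (n - 3) ∨ s j + 2 ≤ s i + 2 * q := by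
      rcases eq_or_lt_of_le (show i + 1 ≤ j from hij) with h | h
      · left
        have e : s j = s i + a i := by rw [← h, hssucc]
        have : a i ≤ a 0 := hmono 0 i (by omega) (by omega)
        omega
      · right
        have e1 : s j = s (j - 1) + a (j - 1) := by
          have e : j - 1 + 1 = j := by omega
          rw [← e, hssucc, e]
        have h1 : a (j - 1) ≤ a (j - 2) := hmono (j - 2) (j - 1) (by omega) (by omega)
        have h2 : s i + a (j - 2) ≤ s (j - 1) := by
          have hsp := hsplit i (j - 1) (by omega)
          have : a (j - 2) ≤ ∑ l ∈ Finset.Ico i (j - 1), a l :=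
            Finset.single_le_sum (f := a) (fun _ _ => Nat.zero_le _)
              (Finset.mem_Ico.2 ⟨by omega, by omega⟩)
          omega
        have h3 : s (j - 1) < s i + q := hjmin _ (by omega)
        omega
    have hjk : s j + q ≤ k := by omega
    have hjt : j < t := by
      rcases eq_or_lt_of_le hjle with h | h
      · exfalso; rw [h, hst] at hjk; omega
      · exact h
    left
    refine ⟨fun l => if l < i then 0 else if l < j then 1 else 2, ?_, ?_⟩
    · intro c
      rcases (by decide : ∀ c : Fin 3, c = 0 ∨ c = 1 ∨ c = 2) c with rfl | rfl | rfl
      · refine ⟨0, by omega, ?_⟩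
        show (if (0:ℕ) < i then (0 : Fin 3) else if 0 < j then 1 else 2) = 0
        rw [if_pos (by omega : (0:ℕ) < i)]
      · refine ⟨i, by omega, ?_⟩
        show (if i < i then (0 : Fin 3) else if i < j then 1 else 2) = 1
        rw [if_neg (lt_irrefl i), if_pos hij]
      · refine ⟨j, by omega, ?_⟩
        show (if j < i then (0 : Fin 3) else if j < j then 1 else 2) = 2
        rw [if_neg (by omega : ¬ j < i), if_neg (lt_irrefl j)]
    · have hF0 : (Finset.range t).filter
          (fun l => (if l < i then (0 : Fin 3) else if l < j then 1 else 2) = 0) =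
          Finset.range i := by
        ext l
        simp only [Finset.mem_filter, Finset.mem_range]
        constructor
        · rintro ⟨hl, h2⟩
          by_contra hc
          rw [if_neg hc] at h2
          split_ifs at h2 <;> exact absurd h2 (by decide)
        · intro hl
          exact ⟨by omega, by rw [if_pos hl]⟩
      have hF1 : (Finset.range t).filter
          (fun l => (if l < i then (0 : Fin 3) else if l < j then 1 else 2) = 1) =
          Finset.Ico i j := by
        ext l
        simp only [Finset.mem_filter, Finset.mem_range, Finset.mem_Ico]
        constructor
        · rintro ⟨hl, h2⟩
          split_ifs at h2 with h3 h4
          · exact absurd h2 (by decide)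
          · exact ⟨by omega, h4⟩
          · exact absurd h2 (by decide)
        · rintro ⟨hl1, hl2⟩
          exact ⟨by omega, by rw [if_neg (by omega), if_pos hl2]⟩
      have hF2 : (Finset.range t).filter
          (fun l => (if l < i then (0 : Fin 3) else if l < j then 1 else 2) = 2) =
          Finset.Ico j t := by
        ext l
        simp only [Finset.mem_filter, Finset.mem_range, Finset.mem_Ico]
        constructor
        · rintro ⟨hl, h2⟩
          split_ifs at h2 with h3 h4
          · exact absurd h2 (by decide)
          · exact absurd h2 (by decide)
          · exact ⟨by omega, hl⟩
        · rintro ⟨hl1, hl2⟩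
          exact ⟨hl2, by rw [if_neg (by omega), if_neg (by omega)]⟩
      have hsp1 := hsplit i j (by omega)
      have hsp2 := hsplit j t (by omega)
      intro c
      rcases (by decide : ∀ c : Fin 3, c = 0 ∨ c = 1 ∨ c = 2) c with rfl | rfl | rfl
      · rw [hF0]
        exact hqi
      · rw [hF1]
        omega
      · rw [hF2]
        omega
end

section
/- Let k ≥ 1 and u ≥ 0 be integers, and let a red/blue edge-coloring of the complete graph on 4k + u vertices be given. Suppose the coloring contains at most k pairwise vertex-disjoint blue copies of K₄ (equivalently, it contains no k+1 pairwise vertex-disjoint blue copies of K₄). Then the coloring contains at least f_k(u) pairwise vertex-disjoint red edges (a red matching of size f_k(u)). -/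
/-- The function `f_k(u)`. -/
def fAux (k u : ℕ) : ℕ :=
  if u ≤ 3 then 0
  else if u ≤ k + 3 then u - 3
  else (u + k - 2) / 2

lemma existsGreatest {P : ℕ → Prop} {b : ℕ} (h0 : P 0) (hb : ∀ n, P n → n ≤ b) :
    ∃ n, P n ∧ ¬ P (n+1) := by
  by_contra h
  push_neg at h
  have hall : ∀ n, P n := by
    intro n; induction n with
    | zero => exact h0
    | succ n ih => exact h n ih
  exact absurd (hb (b+1) (hall (b+1))) (by omega)

lemma triplePick {V : Type*} [DecidableEq V] :
    ∀ (n : ℕ) (B : Finset V) (z : Fin n → Option V),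
    3 * n ≤ B.card →
    (∀ j : Fin n, z j ≠ none → 3 * (j:ℕ) + 4 ≤ B.card) →
    ∃ T : Fin n → Finset V,
      (∀ j, T j ⊆ B ∧ (T j).card = 3 ∧ ∀ a ∈ T j, z j ≠ some a) ∧
      (∀ j l, j ≠ l → Disjoint (T j) (T l)) := by
  intro n
  induction n with
  | zero =>
    intro B z _ _
    exact ⟨fun j => ∅, fun j => j.elim0, fun j => j.elim0⟩
  | succ n ih =>
    intro B z hc hz
    have hB0 : 3 ≤ (B \ (z 0).toFinset).card := by
      rcases h0 : z 0 with _ | a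
      · simp only [Option.toFinset_none, Finset.sdiff_empty]
        omega
      · have h4 := hz 0 (by simp [h0])
        simp only [Fin.val_zero, Nat.mul_zero, Nat.zero_add] at h4
        have h2 := Finset.le_card_sdiff (Option.some a).toFinset B
        simp only [Option.toFinset_some, Finset.card_singleton] at h2 ⊢
        omega
    obtain ⟨T0, hT0sub, hT0card⟩ := Finset.exists_subset_card_eq hB0
    have hT0B : T0 ⊆ B := hT0sub.trans (Finset.sdiff_subset)
    have hz0 : ∀ a ∈ T0, z 0 ≠ some a := by
      intro a ha heq
      have : a ∈ (z 0).toFinset := by simp [heq]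
      exact (Finset.mem_sdiff.mp (hT0sub ha)).2 this
    have hBcard : (B \ T0).card = B.card - 3 := by
      rw [Finset.card_sdiff_of_subset hT0B, hT0card]
    obtain ⟨T', hT'1, hT'2⟩ := ih (B \ T0) (fun j => z j.succ)
      (by omega)
      (by
        intro j hj
        have := hz j.succ hj
        simp only [Fin.val_succ] at this
        omega)
    have hd0 : ∀ l, Disjoint T0 (T' l) := by
      intro l
      rw [Finset.disjoint_left]
      intro x hx hx2
      exact (Finset.mem_sdiff.mp ((hT'1 l).1 hx2)).2 hx
    refine ⟨fun j => Fin.cases T0 T' j, ?_, ?_⟩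
    · intro j
      induction j using Fin.cases with
      | zero => exact ⟨hT0B, hT0card, hz0⟩
      | succ j =>
        obtain ⟨h1, h2, h3⟩ := hT'1 j
        exact ⟨h1.trans Finset.sdiff_subset, h2, h3⟩
    · intro j l hjl
      induction j using Fin.cases with
      | zero =>
        induction l using Fin.cases with
        | zero => exact absurd rfl hjl
        | succ l =>
          simp only [Fin.cases_zero, Fin.cases_succ]
          exact hd0 l
      | succ j =>
        induction l using Fin.cases with
        | zero =>
          simp only [Fin.cases_zero, Fin.cases_succ]
          exact (hd0 j).symm
        | succ l =>
          simp only [Fin.cases_succ]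
          exact hT'2 j l (fun h => hjl (by rw [h]))

/-- **Lemma 3.** Let `k ≥ 1` and `u ≥ 0`, and let `C` be a red/blue coloring of the complete
graph on `4k + u` vertices (here `true` is red and `false` is blue). If `C` contains at most
`k` pairwise vertex-disjoint blue copies of `K₄`, then `C` contains a red matching of size
`f_k(u)`. -/
theorem red_matching_from_few_blue_K4 (k u : ℕ) (hk : 1 ≤ k)
    (C : Sym2 (Fin (4 * k + u)) → Bool)
    (hblue : ¬ HasMonoCliqueMatching C false (k + 1) 4) :
    HasMonoCliqueMatching C true (fAux k u) 2 := by
  classical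
  have h0 : HasMonoCliqueMatching C true 0 2 :=
    ⟨fun j => j.elim0, fun j => j.elim0, fun j l _ => j.elim0⟩
  have hbd : ∀ n, HasMonoCliqueMatching C true n 2 → n ≤ 4 * k + u := by
    rintro n ⟨f, hf, hd⟩
    have hne : ∀ j, ∃ x, x ∈ f j := by
      intro j
      have : 0 < (f j).card := by rw [(hf j).1]; omega
      exact Finset.card_pos.mp this
    choose x hx using hne
    have hinj : Function.Injective x := by
      intro j l h
      by_contra hjl
      exact Finset.disjoint_left.mp (hd j l hjl) (hx j) (h ▸ hx l)
    calc n = Fintype.card (Fin n) := by simp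
    _ ≤ Fintype.card (Fin (4 * k + u)) := Fintype.card_le_of_injective x hinj
    _ = 4 * k + u := by simp
  obtain ⟨ν, hν, hν1⟩ := existsGreatest (P := fun n => HasMonoCliqueMatching C true n 2) h0 hbd
  by_cases hcase : fAux k u ≤ ν
  · obtain ⟨f, hf, hd⟩ := hν
    exact ⟨fun j => f (Fin.castLE hcase j), fun j => hf _,
      fun j l hjl => hd _ _ (fun h => hjl (Fin.castLE_injective hcase h))⟩
  push_neg at hcase
  exfalso
  have hu4 : 4 ≤ u := by
    by_contra h
    have : fAux k u = 0 := by unfold fAux; rw [if_pos (by omega)]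
    omega
  obtain ⟨f, hf, hdisj⟩ := hν
  set S : Finset (Fin (4 * k + u)) := Finset.univ.biUnion f with hS
  have hSmem : ∀ a, a ∈ S ↔ ∃ j, a ∈ f j := by intro a; simp [hS]
  have hfS : ∀ j, f j ⊆ S := fun j a ha => (hSmem a).2 ⟨j, ha⟩
  have hScard : S.card = 2 * ν := by
    rw [hS, Finset.card_biUnion (fun a _ b _ hab => hdisj a b hab)]
    rw [Finset.sum_congr rfl (fun j _ => (hf j).1)]
    simp [mul_comm]
  have hSle : S.card ≤ 4 * k + u := by
    calc S.card ≤ Fintype.card (Fin (4 * k + u)) := Finset.card_le_univ S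
    _ = 4 * k + u := by simp
  have hBcard : (Sᶜ : Finset (Fin (4 * k + u))).card = 4 * k + u - 2 * ν := by
    rw [Finset.card_compl, hScard]; simp
  -- snoc helper: a red matching of size ν cannot be extended by a disjoint red edge
  have hsnoc : ∀ (g : Fin ν → Finset (Fin (4 * k + u))) (A : Finset (Fin (4 * k + u))),
      IsMonoClique C true 2 A →
      (∀ j, IsMonoClique C true 2 (g j)) →
      (∀ j l, j ≠ l → Disjoint (g j) (g l)) →
      (∀ j, Disjoint A (g j)) → False := by
    intro g A hA hg hgd hAd
    apply hν1
    refine ⟨Fin.snoc g A, ?_, ?_⟩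
    · intro j
      induction j using Fin.lastCases with
      | last => rw [Fin.snoc_last]; exact hA
      | cast j => rw [Fin.snoc_castSucc]; exact hg j
    · intro j l hjl
      induction j using Fin.lastCases with
      | last =>
        induction l using Fin.lastCases with
        | last => exact absurd rfl hjl
        | cast l => rw [Fin.snoc_last, Fin.snoc_castSucc]; exact hAd l
      | cast j =>
        induction l using Fin.lastCases with
        | last => rw [Fin.snoc_last, Fin.snoc_castSucc]; exact (hAd j).symm
        | cast l =>
          rw [Fin.snoc_castSucc, Fin.snoc_castSucc]
          exact hgd j l (fun h => hjl (by rw [h]))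
  -- (a) the unmatched vertices form a blue clique
  have hBblue : ∀ a ∈ (Sᶜ : Finset (Fin (4 * k + u))), ∀ b ∈ (Sᶜ : Finset (Fin (4 * k + u))), a ≠ b →
      C s(a, b) = false := by
    intro a ha b hb hab
    by_contra hred
    rw [Bool.not_eq_false] at hred
    have haS : a ∉ S := Finset.mem_compl.mp ha
    have hbS : b ∉ S := Finset.mem_compl.mp hb
    refine hsnoc f {a, b} ⟨?_, ?_⟩ hf hdisj ?_
    · rw [Finset.card_insert_of_notMem (by simp [hab]), Finset.card_singleton]
    · intro x hx y hy hxy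
      simp only [Finset.mem_insert, Finset.mem_singleton] at hx hy
      rcases hx with rfl | rfl <;> rcases hy with rfl | rfl
      · exact absurd rfl hxy
      · exact hred
      · rw [Sym2.eq_swap]; exact hred
      · exact absurd rfl hxy
    · intro j
      rw [Finset.disjoint_left]
      intro x hx hxj
      simp only [Finset.mem_insert, Finset.mem_singleton] at hx
      rcases hx with rfl | rfl
      · exact haS (hfS j hxj)
      · exact hbS (hfS j hxj)
  -- (b) each matching edge has a good endpoint
  have hgood : ∀ j : Fin ν, ∃ w ∈ f j, ∃ zopt : Option (Fin (4 * k + u)),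
      ∀ v ∈ (Sᶜ : Finset (Fin (4 * k + u))), (∀ a, zopt = some a → v ≠ a) → C s(w, v) = false := by
    intro j
    obtain ⟨x, y, hxy, hfj⟩ := Finset.card_eq_two.mp (hf j).1
    have hxf : x ∈ f j := by rw [hfj]; simp
    have hyf : y ∈ f j := by rw [hfj]; simp
    have hxS : x ∈ S := hfS j hxf
    have hyS : y ∈ S := hfS j hyf
    by_cases hx : ∃ z ∈ (Sᶜ : Finset (Fin (4 * k + u))), C s(x, z) = true
    · obtain ⟨z1, hz1, hz1red⟩ := hx
      have hz1S : z1 ∉ S := Finset.mem_compl.mp hz1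
      refine ⟨y, hyf, some z1, ?_⟩
      intro v hv hvz
      have hvz1 : v ≠ z1 := hvz z1 rfl
      have hvS : v ∉ S := Finset.mem_compl.mp hv
      by_contra hc
      rw [Bool.not_eq_false] at hc
      set g : Fin ν → Finset (Fin (4 * k + u)) := Function.update f j {x, z1} with hg
      have hxz1 : x ≠ z1 := fun h => hz1S (h ▸ hxS)
      have hyv : y ≠ v := fun h => hvS (h ▸ hyS)
      have hyz1 : y ≠ z1 := fun h => hz1S (h ▸ hyS)
      have hxv : x ≠ v := fun h => hvS (h ▸ hxS)
      have hgne : ∀ l, l ≠ j → g l = f l := fun l hl => Function.update_of_ne hl _ _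
      have hgjj : g j = {x, z1} := Function.update_self _ _ _
      have hpair : ∀ (p r : Fin (4 * k + u)), p ≠ r → C s(p, r) = true →
          IsMonoClique C true 2 {p, r} := by
        intro p r hpr hcol
        refine ⟨?_, ?_⟩
        · rw [Finset.card_insert_of_notMem (by simp [hpr]), Finset.card_singleton]
        · intro a ha b hb hab
          simp only [Finset.mem_insert, Finset.mem_singleton] at ha hb
          rcases ha with rfl | rfl <;> rcases hb with rfl | rfl
          · exact absurd rfl hab
          · exact hcol
          · rw [Sym2.eq_swap]; exact hcol
          · exact absurd rfl hab
      refine hsnoc g {y, v} (hpair y v hyv hc) ?_ ?_ ?_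
      · intro l
        by_cases hl : l = j
        · subst hl; rw [hgjj]; exact hpair x z1 hxz1 hz1red
        · rw [hgne l hl]; exact hf l
      · intro l l' hll'
        have key : ∀ l', l' ≠ j → Disjoint ({x, z1} : Finset (Fin (4 * k + u))) (f l') := by
          intro l' hl'
          rw [Finset.disjoint_left]
          intro a ha hal'
          simp only [Finset.mem_insert, Finset.mem_singleton] at ha
          rcases ha with rfl | rfl
          · exact Finset.disjoint_left.mp (hdisj j l' (fun h => hl' h.symm)) hxf hal'
          · exact hz1S (hfS l' hal')
        by_cases hl : l = j <;> by_cases hl' : l' = j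
        · subst hl; subst hl'; exact absurd rfl hll'
        · subst hl; rw [hgjj, hgne l' hl']; exact key l' hl'
        · subst hl'; rw [hgjj, hgne l hl]; exact (key l hl).symm
        · rw [hgne l hl, hgne l' hl']; exact hdisj l l' hll'
      · intro l
        rw [Finset.disjoint_left]
        intro a ha hal
        simp only [Finset.mem_insert, Finset.mem_singleton] at ha
        by_cases hl : l = j
        · subst hl; rw [hgjj] at hal
          simp only [Finset.mem_insert, Finset.mem_singleton] at hal
          rcases ha with rfl | rfl <;> rcases hal with rfl | rfl
          · exact hxy rfl
          · exact hyz1 rfl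
          · exact hxv rfl
          · exact hvz1 rfl
        · rw [hgne l hl] at hal
          rcases ha with rfl | rfl
          · exact Finset.disjoint_left.mp (hdisj j l (fun h => hl h.symm)) hyf hal
          · exact hvS (hfS l hal)
    · push_neg at hx
      refine ⟨x, hxf, none, ?_⟩
      intro v hv _
      have := hx v hv
      simpa [Bool.not_eq_true] using this
  choose w hw zopt hzopt using hgood
  -- arithmetic setup
  set t := min ν (k + 1) with ht
  have htν : t ≤ ν := min_le_left _ _
  set q := k + 1 - t with hq
  have hkey : 3 * t + 4 * q ≤ (Sᶜ : Finset (Fin (4 * k + u))).card ∧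
      (1 ≤ t → 3 * t + 1 ≤ (Sᶜ : Finset (Fin (4 * k + u))).card - q) ∧
      q ≤ (Sᶜ : Finset (Fin (4 * k + u))).card := by
    have h2ν : 2 * ν ≤ 4 * k + u := hScard ▸ hSle
    have hfa := hcase
    unfold fAux at hfa
    rw [hBcard]
    split_ifs at hfa <;> omega
  obtain ⟨Q, hQsub, hQcard⟩ := Finset.exists_subset_card_eq hkey.2.2
  have hQe : ∃ e : Fin q → Fin (4 * k + u), Function.Injective e ∧ ∀ i, e i ∈ Q := by
    have e1 := Q.equivFin
    refine ⟨fun i => (e1.symm (Fin.cast hQcard.symm i) : Fin (4 * k + u)), ?_, ?_⟩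
    · intro i j hij
      have h2 := e1.symm.injective (Subtype.ext hij)
      have h3 := congrArg Fin.val h2
      simp only [Fin.coe_cast] at h3
      exact Fin.ext h3
    · intro i; exact (e1.symm _).2
  obtain ⟨e, heinj, heQ⟩ := hQe
  set W : Fin (t + q) → Fin (4 * k + u) := fun j =>
    if h : (j : ℕ) < t then w (Fin.castLE htν ⟨j, h⟩)
    else e ⟨(j : ℕ) - t, by have := j.isLt; omega⟩ with hWdef
  set Z : Fin (t + q) → Option (Fin (4 * k + u)) := fun j =>
    if h : (j : ℕ) < t then zopt (Fin.castLE htν ⟨j, h⟩) else none with hZdef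
  have hB2card : ((Sᶜ : Finset (Fin (4 * k + u))) \ Q).card = (Sᶜ : Finset (Fin (4 * k + u))).card - q := by
    rw [Finset.card_sdiff_of_subset hQsub, hQcard]
  obtain ⟨T, hT1, hT2⟩ := triplePick (t + q) ((Sᶜ : Finset (Fin (4 * k + u))) \ Q) Z
    (by rw [hB2card]; omega)
    (by
      intro j hj
      by_cases h : (j : ℕ) < t
      · rw [hB2card]
        have h1 := hkey.2.1 (by omega)
        omega
      · exfalso; apply hj; rw [hZdef]; simp [h])
  -- properties of the centers
  have hWcase : ∀ j : Fin (t + q), ((j : ℕ) < t ∧ W j ∈ S) ∨ (¬ (j : ℕ) < t ∧ W j ∈ Q) := by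
    intro j
    by_cases h : (j : ℕ) < t
    · left
      refine ⟨h, ?_⟩
      have : W j = w (Fin.castLE htν ⟨j, h⟩) := by rw [hWdef]; simp [h]
      rw [this]
      exact hfS _ (hw _)
    · right
      refine ⟨h, ?_⟩
      have : W j = e ⟨(j : ℕ) - t, by have := j.isLt; omega⟩ := by rw [hWdef]; simp [h]
      rw [this]
      exact heQ _
  have hWnB2 : ∀ j, W j ∉ (Sᶜ : Finset (Fin (4 * k + u))) \ Q := by
    intro j hmem
    rw [Finset.mem_sdiff, Finset.mem_compl] at hmem
    rcases hWcase j with ⟨_, h2⟩ | ⟨_, h2⟩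
    · exact hmem.1 h2
    · exact hmem.2 h2
  have hQS : ∀ a ∈ Q, a ∉ S := fun a ha => Finset.mem_compl.mp (hQsub ha)
  have hWinj : Function.Injective W := by
    intro i j hij
    by_cases hi : (i : ℕ) < t <;> by_cases hj : (j : ℕ) < t
    · have hi' : W i = w (Fin.castLE htν ⟨i, hi⟩) := by rw [hWdef]; simp [hi]
      have hj' : W j = w (Fin.castLE htν ⟨j, hj⟩) := by rw [hWdef]; simp [hj]
      rw [hi', hj'] at hij
      by_contra hne
      have hne2 : Fin.castLE htν ⟨i, hi⟩ ≠ Fin.castLE htν ⟨j, hj⟩ := by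
        intro h
        apply hne
        have := congrArg Fin.val h
        simp at this
        exact Fin.ext this
      exact Finset.disjoint_left.mp (hdisj _ _ hne2) (hw _) (hij ▸ hw _)
    · exfalso
      rcases hWcase i with ⟨_, h2⟩ | ⟨h1, _⟩
      · rcases hWcase j with ⟨h1', _⟩ | ⟨_, h2'⟩
        · exact hj h1'
        · exact hQS _ h2' (hij ▸ h2)
      · exact h1 hi
    · exfalso
      rcases hWcase j with ⟨_, h2⟩ | ⟨h1, _⟩
      · rcases hWcase i with ⟨h1', _⟩ | ⟨_, h2'⟩
        · exact hi h1'
        · exact hQS _ h2' (hij ▸ h2)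
      · exact h1 hj
    · have hi' : W i = e ⟨(i : ℕ) - t, by have := i.isLt; omega⟩ := by rw [hWdef]; simp [hi]
      have hj' : W j = e ⟨(j : ℕ) - t, by have := j.isLt; omega⟩ := by rw [hWdef]; simp [hj]
      rw [hi', hj'] at hij
      have := congrArg Fin.val (heinj hij)
      simp at this
      exact Fin.ext (by omega)
  have hWblue : ∀ j, ∀ v ∈ T j, C s(W j, v) = false := by
    intro j v hv
    have hvB2 : v ∈ (Sᶜ : Finset (Fin (4 * k + u))) \ Q := (hT1 j).1 hv
    have hvSc : v ∈ (Sᶜ : Finset (Fin (4 * k + u))) := (Finset.mem_sdiff.mp hvB2).1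
    by_cases h : (j : ℕ) < t
    · have hWj : W j = w (Fin.castLE htν ⟨j, h⟩) := by rw [hWdef]; simp [h]
      have hZj : Z j = zopt (Fin.castLE htν ⟨j, h⟩) := by rw [hZdef]; simp [h]
      rw [hWj]
      apply hzopt _ v hvSc
      intro a haeq hva
      subst hva
      exact (hT1 j).2.2 v hv (by rw [hZj]; exact haeq)
    · have hWj : W j = e ⟨(j : ℕ) - t, by have := j.isLt; omega⟩ := by rw [hWdef]; simp [h]
      have hWQ : W j ∈ Q := by
        rcases hWcase j with ⟨h1, _⟩ | ⟨_, h2⟩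
        · exact absurd h1 h
        · exact h2
      apply hBblue _ (hQsub hWQ) _ hvSc
      intro heq
      exact (Finset.mem_sdiff.mp hvB2).2 (heq ▸ hWQ)
  -- assemble the blue K4's
  have hfinal : HasMonoCliqueMatching C false (t + q) 4 := by
    refine ⟨fun j => insert (W j) (T j), ?_, ?_⟩
    · intro j
      have hWT : W j ∉ T j := fun h => hWnB2 j ((hT1 j).1 h)
      refine ⟨?_, ?_⟩
      · rw [Finset.card_insert_of_notMem hWT, (hT1 j).2.1]
      · intro a ha b hb hab
        rw [Finset.mem_insert] at ha hb
        rcases ha with rfl | ha <;> rcases hb with rfl | hb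
        · exact absurd rfl hab
        · exact hWblue j b hb
        · rw [Sym2.eq_swap]; exact hWblue j a ha
        · have haS : a ∈ (Sᶜ : Finset (Fin (4 * k + u))) := (Finset.mem_sdiff.mp ((hT1 j).1 ha)).1
          have hbS : b ∈ (Sᶜ : Finset (Fin (4 * k + u))) := (Finset.mem_sdiff.mp ((hT1 j).1 hb)).1
          exact hBblue a haS b hbS hab
    · intro j l hjl
      rw [Finset.disjoint_left]
      intro a ha hal
      rw [Finset.mem_insert] at ha hal
      rcases ha with rfl | ha <;> rcases hal with heq | hal
      · exact hjl (hWinj heq)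
      · exact hWnB2 j ((hT1 l).1 hal)
      · exact hWnB2 l (heq ▸ (hT1 j).1 ha)
      · exact Finset.disjoint_left.mp (hT2 j l hjl) ha hal
  have htq : t + q = k + 1 := by omega
  exact hblue (htq ▸ hfinal)
end

section
/- Suppose that every red/blue edge-coloring of the complete graph on 23 vertices contains two pairwise vertex-disjoint copies of K₄ in the same color (i.e., R₂(2K₄) ≤ 23). Then R₂(c(2K₄)) = 23; that is, 23 is the least integer N such that every red/blue edge-coloring of the complete graph on N vertices contains a monochromatic connected 2K₄-matching. -/
open scoped Classical

namespace RamseyAux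

variable {N : ℕ}

def Pc (C : Sym2 (Fin N) → Bool) (k : Bool) (u v : Fin N) : Prop :=
  u ≠ v ∧ C s(u, v) = k

lemma Pc.symm {C : Sym2 (Fin N) → Bool} {k : Bool} {u v : Fin N} (h : Pc C k u v) :
    Pc C k v u := ⟨h.1.symm, by rw [Sym2.eq_swap]; exact h.2⟩

abbrev Rch (C : Sym2 (Fin N) → Bool) (i : Bool) (u v : Fin N) : Prop :=
  (colorGraph C i).Reachable u v

section basic

variable {C : Sym2 (Fin N) → Bool} {i : Bool}

lemma color_dichotomy (e : Sym2 (Fin N)) : C e = i ∨ C e = !i := by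
  cases i <;> cases hc : C e <;> simp_all

lemma pc_of_not_rch {u v : Fin N} (h : ¬ Rch C i u v) : Pc C (!i) u v := by
  have hne : u ≠ v := by rintro rfl; exact h (SimpleGraph.Reachable.refl u)
  rcases color_dichotomy (C := C) (i := i) s(u, v) with hc | hc
  · exact absurd (SimpleGraph.Adj.reachable (⟨hne, hc⟩ : (colorGraph C i).Adj u v)) h
  · exact ⟨hne, hc⟩

lemma rch_of_pc {u v : Fin N} (h : Pc C i u v) : Rch C i u v :=
  SimpleGraph.Adj.reachable h

lemma mkC4 {k : Bool} {a b c d : Fin N}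
    (h1 : Pc C k a b) (h2 : Pc C k a c) (h3 : Pc C k a d)
    (h4 : Pc C k b c) (h5 : Pc C k b d) (h6 : Pc C k c d) :
    IsMonoClique C k 4 ({a, b, c, d} : Finset (Fin N)) := by
  constructor
  · rw [Finset.card_insert_of_notMem (by simp [h1.1, h2.1, h3.1]),
      Finset.card_insert_of_notMem (by simp [h4.1, h5.1]),
      Finset.card_insert_of_notMem (by simp [h6.1]), Finset.card_singleton]
  · intro u hu v hv huv
    simp only [Finset.mem_insert, Finset.mem_singleton] at hu hv
    rcases hu with rfl | rfl | rfl | rfl <;> rcases hv with rfl | rfl | rfl | rfl <;>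
      first
        | exact absurd rfl huv
        | exact h1.2 | exact h2.2 | exact h3.2 | exact h4.2 | exact h5.2 | exact h6.2
        | exact h1.symm.2 | exact h2.symm.2 | exact h3.symm.2
        | exact h4.symm.2 | exact h5.symm.2 | exact h6.symm.2

lemma mkDisj4 {a b c d a' b' c' d' : Fin N}
    (g1 : a ≠ a') (g2 : a ≠ b') (g3 : a ≠ c') (g4 : a ≠ d')
    (g5 : b ≠ a') (g6 : b ≠ b') (g7 : b ≠ c') (g8 : b ≠ d')
    (g9 : c ≠ a') (g10 : c ≠ b') (g11 : c ≠ c') (g12 : c ≠ d')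
    (g13 : d ≠ a') (g14 : d ≠ b') (g15 : d ≠ c') (g16 : d ≠ d') :
    Disjoint ({a, b, c, d} : Finset (Fin N)) ({a', b', c', d'} : Finset (Fin N)) := by
  rw [Finset.disjoint_left]
  intro x hx hx'
  simp only [Finset.mem_insert, Finset.mem_singleton] at hx hx'
  rcases hx with rfl | rfl | rfl | rfl <;> rcases hx' with rfl | rfl | rfl | rfl <;> simp_all

/-- two disjoint cliques of the opposite color -/
def TwoJ (C : Sym2 (Fin N) → Bool) (i : Bool) : Prop :=
  ∃ S T : Finset (Fin N), IsMonoClique C (!i) 4 S ∧ IsMonoClique C (!i) 4 T ∧ Disjoint S T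

/-- two disjoint cliques of color i joined by reachability -/
def TwoI (C : Sym2 (Fin N) → Bool) (i : Bool) : Prop :=
  ∃ S T : Finset (Fin N), IsMonoClique C i 4 S ∧ IsMonoClique C i 4 T ∧ Disjoint S T ∧
    ∃ s ∈ S, ∃ t ∈ T, Rch C i s t

lemma twoJ_of {a b c d a' b' c' d' : Fin N}
    (h1 : Pc C (!i) a b) (h2 : Pc C (!i) a c) (h3 : Pc C (!i) a d)
    (h4 : Pc C (!i) b c) (h5 : Pc C (!i) b d) (h6 : Pc C (!i) c d)
    (k1 : Pc C (!i) a' b') (k2 : Pc C (!i) a' c') (k3 : Pc C (!i) a' d')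
    (k4 : Pc C (!i) b' c') (k5 : Pc C (!i) b' d') (k6 : Pc C (!i) c' d')
    (g1 : a ≠ a') (g2 : a ≠ b') (g3 : a ≠ c') (g4 : a ≠ d')
    (g5 : b ≠ a') (g6 : b ≠ b') (g7 : b ≠ c') (g8 : b ≠ d')
    (g9 : c ≠ a') (g10 : c ≠ b') (g11 : c ≠ c') (g12 : c ≠ d')
    (g13 : d ≠ a') (g14 : d ≠ b') (g15 : d ≠ c') (g16 : d ≠ d') :
    TwoJ C i :=
  ⟨_, _, mkC4 h1 h2 h3 h4 h5 h6, mkC4 k1 k2 k3 k4 k5 k6,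
    mkDisj4 g1 g2 g3 g4 g5 g6 g7 g8 g9 g10 g11 g12 g13 g14 g15 g16⟩

/-- component of x -/
noncomputable def cmp (C : Sym2 (Fin N) → Bool) (i : Bool) (x : Fin N) : Finset (Fin N) :=
  Finset.univ.filter (fun y => Rch C i x y)

lemma mem_cmp {x y : Fin N} : y ∈ cmp C i x ↔ Rch C i x y := by
  simp [cmp]

lemma self_mem_cmp {x : Fin N} : x ∈ cmp C i x := mem_cmp.2 (SimpleGraph.Reachable.refl x)

lemma rch_of_mem_cmp {x u v : Fin N} (hu : u ∈ cmp C i x) (hv : v ∈ cmp C i x) :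
    Rch C i u v := (mem_cmp.1 hu).symm.trans (mem_cmp.1 hv)

lemma not_rch_cross {x y u v : Fin N} (hxy : ¬ Rch C i x y)
    (hu : u ∈ cmp C i x) (hv : v ∈ cmp C i y) : ¬ Rch C i u v := fun h =>
  hxy (((mem_cmp.1 hu).trans h).trans (mem_cmp.1 hv).symm)

lemma pc_cross {x y u v : Fin N} (hxy : ¬ Rch C i x y)
    (hu : u ∈ cmp C i x) (hv : v ∈ cmp C i y) : Pc C (!i) u v :=
  pc_of_not_rch (not_rch_cross hxy hu hv)

/-- a pairwise-i set of size ≥ 8 gives TwoI (it is internally connected) -/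
lemma twoI_of_pairwise {X : Finset (Fin N)}
    (hpair : ∀ u ∈ X, ∀ v ∈ X, u ≠ v → C s(u, v) = i)
    (h8 : 8 ≤ X.card) : TwoI C i := by
  have hcon : ∀ u ∈ X, ∀ v ∈ X, Rch C i u v := by
    intro u hu v hv
    by_cases huv : u = v
    · exact huv ▸ SimpleGraph.Reachable.refl u
    · exact rch_of_pc ⟨huv, hpair u hu v hv huv⟩
  obtain ⟨S, hS, hScard⟩ := Finset.exists_subset_card_eq (show 4 ≤ X.card by omega)
  have hsd : 4 ≤ (X \ S).card := by
    rw [Finset.card_sdiff_of_subset hS]; omega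
  obtain ⟨T, hT, hTcard⟩ := Finset.exists_subset_card_eq hsd
  have hTX : T ⊆ X := hT.trans (Finset.sdiff_subset)
  have hdisj : Disjoint S T := by
    rw [Finset.disjoint_right]
    intro x hx hx'
    exact (Finset.mem_sdiff.1 (hT hx)).2 hx'
  obtain ⟨s, hs⟩ := Finset.card_pos.1 (by omega : 0 < S.card)
  obtain ⟨t, ht⟩ := Finset.card_pos.1 (by omega : 0 < T.card)
  exact ⟨S, T, ⟨hScard, fun u hu v hv huv => hpair u (hS hu) v (hS hv) huv⟩,
    ⟨hTcard, fun u hu v hv huv => hpair u (hTX hu) v (hTX hv) huv⟩, hdisj,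
    s, hs, t, ht, hcon s (hS hs) t (hTX ht)⟩

def HasJedge (C : Sym2 (Fin N) → Bool) (i : Bool) (X : Finset (Fin N)) : Prop :=
  ∃ u v, u ∈ X ∧ v ∈ X ∧ Pc C (!i) u v

/-- two disjoint internal j-edges -/
def Nu2 (C : Sym2 (Fin N) → Bool) (i : Bool) (X : Finset (Fin N)) : Prop :=
  ∃ u v u' v', u ∈ X ∧ v ∈ X ∧ u' ∈ X ∧ v' ∈ X ∧ Pc C (!i) u v ∧ Pc C (!i) u' v' ∧
    u ≠ u' ∧ u ≠ v' ∧ v ≠ u' ∧ v ≠ v'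

lemma card_le_seven (H2 : ¬ TwoI C i) {X : Finset (Fin N)}
    (h : ¬ HasJedge C i X) : X.card ≤ 7 := by
  by_contra h8
  apply H2
  apply twoI_of_pairwise (X := X)
  · intro u hu v hv huv
    rcases color_dichotomy (C := C) (i := i) s(u, v) with hc | hc
    · exact hc
    · exact absurd ⟨u, v, hu, hv, huv, hc⟩ h
  · omega

lemma pairwise_i_of_no_jedge {X : Finset (Fin N)} (h : ¬ HasJedge C i X) :
    ∀ u ∈ X, ∀ v ∈ X, u ≠ v → C s(u, v) = i := by
  intro u hu v hv huv
  rcases color_dichotomy (C := C) (i := i) s(u, v) with hc | hc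
  · exact hc
  · exact absurd ⟨u, v, hu, hv, huv, hc⟩ h

end basic


section c3

variable {N : ℕ} {C : Sym2 (Fin N) → Bool} {i : Bool}

open Finset

lemma twoI_of_two_cliques {S T : Finset (Fin N)} {x : Fin N}
    (hS : S ⊆ cmp C i x) (hT : T ⊆ cmp C i x)
    (cS : IsMonoClique C i 4 S) (cT : IsMonoClique C i 4 T) (hd : Disjoint S T) :
    TwoI C i := by
  obtain ⟨s, hs⟩ := Finset.card_pos.1 (by rw [cS.1]; omega)
  obtain ⟨t, ht⟩ := Finset.card_pos.1 (by rw [cT.1]; omega)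
  exact ⟨S, T, cS, cT, hd, s, hs, t, ht, rch_of_mem_cmp (hS hs) (hT ht)⟩

lemma card_le_eight (H2 : ¬ TwoI C i) {X : Finset (Fin N)}
    (hnu : ¬ Nu2 C i X) : X.card ≤ 8 := by
  by_contra hc
  have h9 : 9 ≤ X.card := by omega
  by_cases hje : HasJedge C i X
  swap
  · have h7 := card_le_seven H2 hje
    omega
  obtain ⟨a, b, ha, hb, hab⟩ := hje
  by_cases hstar : ∀ u v, u ∈ X → v ∈ X → Pc C (!i) u v → u = a ∨ v = a
  · -- star case : X erase a is pairwise i, of size ≥ 8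
    apply H2
    apply twoI_of_pairwise (X := X.erase a)
    · intro u hu v hv huv
      rcases color_dichotomy (C := C) (i := i) s(u, v) with hcol | hcol
      · exact hcol
      · rcases hstar u v (Finset.mem_of_mem_erase hu) (Finset.mem_of_mem_erase hv)
          ⟨huv, hcol⟩ with h | h
        · exact absurd h (Finset.ne_of_mem_erase hu)
        · exact absurd h (Finset.ne_of_mem_erase hv)
    · rw [Finset.card_erase_of_mem ha]; omega
  push_neg at hstar
  obtain ⟨u, v, hu, hv, huv, hua, hva⟩ := hstar
  -- the two edges (a,b) and (u,v) must intersect, and a ∉ {u,v}, so b ∈ {u,v}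
  have hbuv : b = u ∨ b = v := by
    by_contra hb'
    push_neg at hb'
    exact hnu ⟨a, b, u, v, ha, hb, hu, hv, hab, huv,
      (Ne.symm hua), (Ne.symm hva), hb'.1, hb'.2⟩
  -- normalize so that the second edge is (b, c) with c ∉ {a, b}
  obtain ⟨c, hcX, hbc, hca⟩ : ∃ c, c ∈ X ∧ Pc C (!i) b c ∧ c ≠ a := by
    rcases hbuv with rfl | rfl
    · exact ⟨v, hv, huv, hva⟩
    · exact ⟨u, hu, huv.symm, hua⟩
  have hcb : c ≠ b := hbc.1.symm
  have hba : b ≠ a := hab.1.symm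
  -- every internal j-edge contains b or is exactly {a, c}
  have key : ∀ g1 g2, g1 ∈ X → g2 ∈ X → Pc C (!i) g1 g2 →
      g1 = b ∨ g2 = b ∨ (g1 = a ∧ g2 = c) ∨ (g1 = c ∧ g2 = a) := by
    intro g1 g2 hg1 hg2 hg
    by_cases h1b : g1 = b
    · exact Or.inl h1b
    by_cases h2b : g2 = b
    · exact Or.inr (Or.inl h2b)
    have hga : g1 = a ∨ g2 = a := by
      by_contra hg'
      push_neg at hg'
      exact hnu ⟨a, b, g1, g2, ha, hb, hg1, hg2, hab, hg,
        (Ne.symm hg'.1), (Ne.symm hg'.2), (fun h => h1b h.symm), (fun h => h2b h.symm)⟩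
    have hgc : g1 = c ∨ g2 = c := by
      by_contra hg'
      push_neg at hg'
      exact hnu ⟨b, c, g1, g2, hb, hcX, hg1, hg2, hbc, hg,
        (fun h => h1b h.symm), (fun h => h2b h.symm), (Ne.symm hg'.1), (Ne.symm hg'.2)⟩
    rcases hga with rfl | rfl
    · rcases hgc with h | h
      · exact absurd h hca.symm
      · exact Or.inr (Or.inr (Or.inl ⟨rfl, h⟩))
    · rcases hgc with h | h
      · exact Or.inr (Or.inr (Or.inr ⟨h, rfl⟩))
      · exact absurd h hca.symm
  -- Y := X minus {a,b,c}
  set Y := X \ {a, b, c} with hY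
  have hYcard : 6 ≤ Y.card := by
    have hsub : ({a, b, c} : Finset (Fin N)) ⊆ X := by
      intro z hz
      simp only [Finset.mem_insert, Finset.mem_singleton] at hz
      rcases hz with rfl | rfl | rfl <;> assumption
    have h3 : ({a, b, c} : Finset (Fin N)).card = 3 := by
      rw [Finset.card_insert_of_notMem (by simp [hab.1, Ne.symm hca]),
        Finset.card_insert_of_notMem (by simp [hbc.1]), Finset.card_singleton]
    rw [hY, Finset.card_sdiff_of_subset hsub, h3]
    omega
  have hYmem : ∀ z ∈ Y, z ∈ X ∧ z ≠ a ∧ z ≠ b ∧ z ≠ c := by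
    intro z hz
    rw [hY, Finset.mem_sdiff] at hz
    simp only [Finset.mem_insert, Finset.mem_singleton] at hz
    push_neg at hz
    exact ⟨hz.1, hz.2.1, hz.2.2.1, hz.2.2.2⟩
  -- all colors inside Y ∪ {a} and Y ∪ {c} avoiding the exceptional pairs are i
  have hallI : ∀ g1 g2, g1 ∈ X → g2 ∈ X → g1 ≠ g2 → g1 ≠ b → g2 ≠ b →
      ¬ (g1 = a ∧ g2 = c) → ¬ (g1 = c ∧ g2 = a) → C s(g1, g2) = i := by
    intro g1 g2 hg1 hg2 hne h1b h2b hac hca'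
    rcases color_dichotomy (C := C) (i := i) s(g1, g2) with hcol | hcol
    · exact hcol
    · rcases key g1 g2 hg1 hg2 ⟨hne, hcol⟩ with h | h | h | h
      · exact absurd h h1b
      · exact absurd h h2b
      · exact absurd h hac
      · exact absurd h hca'
  obtain ⟨S, hSY, hScard⟩ := Finset.exists_subset_card_eq (show 3 ≤ Y.card by omega)
  have hsd : 3 ≤ (Y \ S).card := by rw [Finset.card_sdiff_of_subset hSY]; omega
  obtain ⟨T, hTY', hTcard⟩ := Finset.exists_subset_card_eq hsd
  have hTY : T ⊆ Y := hTY'.trans Finset.sdiff_subset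
  have haS : a ∉ S := fun h => (hYmem a (hSY h)).2.1 rfl
  have hcT : c ∉ T := fun h => (hYmem c (hTY h)).2.2.2 rfl
  have hSX : ∀ z ∈ S, z ∈ X := fun z hz => (hYmem z (hSY hz)).1
  have hTX : ∀ z ∈ T, z ∈ X := fun z hz => (hYmem z (hTY hz)).1
  have cl1 : IsMonoClique C i 4 (insert a S) := by
    constructor
    · rw [Finset.card_insert_of_notMem haS, hScard]
    · intro g1 hg1 g2 hg2 hne
      rcases Finset.mem_insert.1 hg1 with rfl | hg1' <;>
        rcases Finset.mem_insert.1 hg2 with rfl | hg2'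
      · exact absurd rfl hne
      · exact hallI _ _ ha (hSX _ hg2') hne hab.1 (hYmem _ (hSY hg2')).2.2.1
          (fun h => (hYmem _ (hSY hg2')).2.2.2 h.2) (fun h => hca h.1.symm)
      · exact hallI _ _ (hSX _ hg1') ha hne (hYmem _ (hSY hg1')).2.2.1 hab.1
          (fun h => (hYmem _ (hSY hg1')).2.1 h.1) (fun h => (hYmem _ (hSY hg1')).2.2.2 h.1)
      · exact hallI _ _ (hSX _ hg1') (hSX _ hg2') hne (hYmem _ (hSY hg1')).2.2.1
          (hYmem _ (hSY hg2')).2.2.1 (fun h => (hYmem _ (hSY hg1')).2.1 h.1)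
          (fun h => (hYmem _ (hSY hg1')).2.2.2 h.1)
  have cl2 : IsMonoClique C i 4 (insert c T) := by
    constructor
    · rw [Finset.card_insert_of_notMem hcT, hTcard]
    · intro g1 hg1 g2 hg2 hne
      rcases Finset.mem_insert.1 hg1 with rfl | hg1' <;>
        rcases Finset.mem_insert.1 hg2 with rfl | hg2'
      · exact absurd rfl hne
      · exact hallI _ _ hcX (hTX _ hg2') hne hcb (hYmem _ (hTY hg2')).2.2.1
          (fun h => hca h.1) (fun h => (hYmem _ (hTY hg2')).2.1 h.2)
      · exact hallI _ _ (hTX _ hg1') hcX hne (hYmem _ (hTY hg1')).2.2.1 hcb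
          (fun h => (hYmem _ (hTY hg1')).2.1 h.1) (fun h => hca h.2)
      · exact hallI _ _ (hTX _ hg1') (hTX _ hg2') hne (hYmem _ (hTY hg1')).2.2.1
          (hYmem _ (hTY hg2')).2.2.1 (fun h => (hYmem _ (hTY hg1')).2.1 h.1)
          (fun h => (hYmem _ (hTY hg1')).2.2.2 h.1)
  have hdisj : Disjoint (insert a S) (insert c T) := by
    rw [Finset.disjoint_left]
    intro z hz hz'
    rcases Finset.mem_insert.1 hz with rfl | hzS
    · rcases Finset.mem_insert.1 hz' with h | h
      · exact hca h.symm
      · exact (hYmem _ (hTY h)).2.1 rfl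
    · rcases Finset.mem_insert.1 hz' with rfl | hzT
      · exact (hYmem _ (hSY hzS)).2.2.2 rfl
      · exact (Finset.mem_sdiff.1 (hTY' hzT)).2 hzS
  -- a is reachable to c through S and T (all edges colored i)
  obtain ⟨s0, hs0⟩ := Finset.card_pos.1 (by omega : 0 < S.card)
  obtain ⟨t0, ht0⟩ := Finset.card_pos.1 (by omega : 0 < T.card)
  have hrac : Rch C i a c := by
    have e1 : Pc C i a s0 := ⟨fun h => haS (h ▸ hs0), cl1.2 a (Finset.mem_insert_self _ _)
      s0 (Finset.mem_insert_of_mem hs0) (fun h => haS (h ▸ hs0))⟩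
    have hst : s0 ≠ t0 := fun h => (Finset.mem_sdiff.1 (hTY' ht0)).2 (h ▸ hs0)
    have e2 : Pc C i s0 t0 := ⟨hst, hallI _ _ (hSX _ hs0) (hTX _ ht0) hst
      (hYmem _ (hSY hs0)).2.2.1 (hYmem _ (hTY ht0)).2.2.1
      (fun h => (hYmem _ (hSY hs0)).2.1 h.1) (fun h => (hYmem _ (hSY hs0)).2.2.2 h.1)⟩
    have e3 : Pc C i t0 c := ⟨fun h => hcT (h ▸ ht0),
      hallI _ _ (hTX _ ht0) hcX (fun h => hcT (h ▸ ht0)) (hYmem _ (hTY ht0)).2.2.1 hcb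
      (fun h => (hYmem _ (hTY ht0)).2.1 h.1) (fun h => (hYmem _ (hTY ht0)).2.2.2 h.1)⟩
    exact (rch_of_pc e1).trans ((rch_of_pc e2).trans (rch_of_pc e3))
  exact H2 ⟨insert a S, insert c T, cl1, cl2, hdisj, a, Finset.mem_insert_self _ _,
    c, Finset.mem_insert_self _ _, hrac⟩

end c3


section ramsey

variable {N : ℕ} {C : Sym2 (Fin N) → Bool} {i : Bool}

open Finset

/-- any 6 vertices contain a monochromatic triangle -/
lemma mono_triangle {S : Finset (Fin N)} (h6 : 6 ≤ S.card) :
    ∃ k, ∃ a ∈ S, ∃ b ∈ S, ∃ c ∈ S, Pc C k a b ∧ Pc C k a c ∧ Pc C k b c := by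
  obtain ⟨x, hx⟩ := Finset.card_pos.1 (by omega : 0 < S.card)
  set S' := S.erase x with hS'
  have h5 : 5 ≤ S'.card := by rw [hS', Finset.card_erase_of_mem hx]; omega
  have hsplit : (S'.filter (fun y => C s(x, y) = true)).card +
      (S'.filter (fun y => ¬ (C s(x, y) = true))).card = S'.card :=
    Finset.card_filter_add_card_filter_not _
  have hbig : ∃ k : Bool, 3 ≤ (S'.filter (fun y => C s(x, y) = k)).card := by
    by_contra hcon
    push_neg at hcon
    have h1 := hcon true
    have h2 := hcon false
    have : (S'.filter (fun y => ¬ (C s(x, y) = true))) =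
        (S'.filter (fun y => C s(x, y) = false)) := by
      apply Finset.filter_congr
      intro y _
      simp
    rw [this] at hsplit
    omega
  obtain ⟨k, hk⟩ := hbig
  obtain ⟨T, hT, hTcard⟩ := Finset.exists_subset_card_eq hk
  obtain ⟨a, b, c, hab, hac, hbc, rfl⟩ := Finset.card_eq_three.1 hTcard
  have ha := hT (by simp : a ∈ ({a, b, c} : Finset (Fin N)))
  have hb := hT (by simp : b ∈ ({a, b, c} : Finset (Fin N)))
  have hc := hT (by simp : c ∈ ({a, b, c} : Finset (Fin N)))
  rw [Finset.mem_filter] at ha hb hc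
  have haS : a ∈ S := Finset.mem_of_mem_erase ha.1
  have hbS : b ∈ S := Finset.mem_of_mem_erase hb.1
  have hcS : c ∈ S := Finset.mem_of_mem_erase hc.1
  have hxa : x ≠ a := (Finset.ne_of_mem_erase ha.1).symm
  have hxb : x ≠ b := (Finset.ne_of_mem_erase hb.1).symm
  have hxc : x ≠ c := (Finset.ne_of_mem_erase hc.1).symm
  rcases color_dichotomy (C := C) (i := k) s(a, b) with h1 | h1
  · exact ⟨k, x, hx, a, haS, b, hbS, ⟨hxa, ha.2⟩, ⟨hxb, hb.2⟩, ⟨hab, h1⟩⟩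
  rcases color_dichotomy (C := C) (i := k) s(a, c) with h2 | h2
  · exact ⟨k, x, hx, a, haS, c, hcS, ⟨hxa, ha.2⟩, ⟨hxc, hc.2⟩, ⟨hac, h2⟩⟩
  rcases color_dichotomy (C := C) (i := k) s(b, c) with h3 | h3
  · exact ⟨k, x, hx, b, hbS, c, hcS, ⟨hxb, hb.2⟩, ⟨hxc, hc.2⟩, ⟨hbc, h3⟩⟩
  · exact ⟨!k, a, haS, b, hbS, c, hcS, ⟨hab, h1⟩, ⟨hac, h2⟩, ⟨hbc, h3⟩⟩

def NoJTriangle (C : Sym2 (Fin N) → Bool) (i : Bool) (S : Finset (Fin N)) : Prop :=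
  ∀ a ∈ S, ∀ b ∈ S, ∀ c ∈ S, ¬ (Pc C (!i) a b ∧ Pc C (!i) a c ∧ Pc C (!i) b c)

/-- R(3,4) ≤ 9 : a j-triangle-free 9-set contains an i-K₄. -/
lemma K4_of_triangle_free {S : Finset (Fin N)} (h9 : 9 ≤ S.card)
    (htf : NoJTriangle C i S) :
    ∃ T, T ⊆ S ∧ IsMonoClique C i 4 T := by
  -- shrink to exactly 9
  obtain ⟨S₀, hS₀sub, hS₀⟩ := Finset.exists_subset_card_eq h9
  have htf₀ : NoJTriangle C i S₀ := fun a ha b hb c hc =>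
    htf a (hS₀sub ha) b (hS₀sub hb) c (hS₀sub hc)
  suffices h : ∃ T, T ⊆ S₀ ∧ IsMonoClique C i 4 T by
    obtain ⟨T, hT, hcl⟩ := h
    exact ⟨T, hT.trans hS₀sub, hcl⟩
  clear htf h9 hS₀sub
  by_contra hK4
  push_neg at hK4
  set J := fun v => (S₀.erase v).filter (fun y => C s(v, y) = !i) with hJ
  have hJsubS : ∀ v, J v ⊆ S₀ := fun v =>
    (Finset.filter_subset _ _).trans (Finset.erase_subset _ _)
  have claim1 : ∀ v ∈ S₀, (J v).card ≤ 3 := by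
    intro v hv
    by_contra h4
    obtain ⟨T, hT, hTcard⟩ := Finset.exists_subset_card_eq (by omega : 4 ≤ (J v).card)
    refine hK4 T (hT.trans (hJsubS v)) ⟨hTcard, ?_⟩
    intro a ha b hb hne
    have haJ := hT ha
    have hbJ := hT hb
    rw [hJ, Finset.mem_filter] at haJ hbJ
    rcases color_dichotomy (C := C) (i := i) s(a, b) with hcol | hcol
    · exact hcol
    · exact absurd ⟨⟨(Finset.ne_of_mem_erase haJ.1).symm, haJ.2⟩,
        ⟨(Finset.ne_of_mem_erase hbJ.1).symm, hbJ.2⟩, ⟨hne, hcol⟩⟩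
        (htf₀ v hv a (Finset.mem_of_mem_erase haJ.1) b (Finset.mem_of_mem_erase hbJ.1))
  have claim2 : ∀ v ∈ S₀, 3 ≤ (J v).card := by
    intro v hv
    by_contra h2
    set I := (S₀.erase v).filter (fun y => ¬ (C s(v, y) = !i)) with hI
    have hsplit : (J v).card + I.card = (S₀.erase v).card :=
      Finset.card_filter_add_card_filter_not _
    have h8 : (S₀.erase v).card = 8 := by rw [Finset.card_erase_of_mem hv, hS₀]
    have h6 : 6 ≤ I.card := by omega
    obtain ⟨k, a, ha, b, hb, c, hc, p1, p2, p3⟩ := mono_triangle (C := C) h6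
    have hmemI : ∀ z, z ∈ I → z ∈ S₀ ∧ z ≠ v ∧ C s(v, z) = i := by
      intro z hz
      rw [hI, Finset.mem_filter] at hz
      refine ⟨Finset.mem_of_mem_erase hz.1, Finset.ne_of_mem_erase hz.1, ?_⟩
      rcases color_dichotomy (C := C) (i := i) s(v, z) with hcol | hcol
      · exact hcol
      · exact absurd hcol hz.2
    obtain ⟨haS, hav, hca⟩ := hmemI a ha
    obtain ⟨hbS, hbv, hcb⟩ := hmemI b hb
    obtain ⟨hcS, hcv, hcc⟩ := hmemI c hc
    by_cases hki : k = i
    · subst hki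
      refine hK4 {v, a, b, c} ?_ (mkC4 ⟨hav.symm, hca⟩ ⟨hbv.symm, hcb⟩ ⟨hcv.symm, hcc⟩ p1 p2 p3)
      intro z hz
      simp only [Finset.mem_insert, Finset.mem_singleton] at hz
      rcases hz with rfl | rfl | rfl | rfl <;> assumption
    · have hk : k = !i := by cases k <;> cases i <;> simp_all
      subst hk
      exact htf₀ a haS b hbS c hcS ⟨p1, p2, p3⟩
  -- handshake contradiction
  let G : SimpleGraph (Fin N) :=
    { Adj := fun u v => u ≠ v ∧ u ∈ S₀ ∧ v ∈ S₀ ∧ C s(u, v) = !i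
      symm := by
        constructor
        intro u v h
        exact ⟨h.1.symm, h.2.2.1, h.2.1, by rw [Sym2.eq_swap]; exact h.2.2.2⟩
      loopless := ⟨fun u h => h.1 rfl⟩ }
  haveI : DecidableRel G.Adj := fun a b => Classical.propDecidable _
  have hdeg : ∀ v ∈ S₀, G.degree v = 3 := by
    intro v hv
    have : G.neighborFinset v = J v := by
      ext y
      rw [SimpleGraph.mem_neighborFinset, hJ, Finset.mem_filter, Finset.mem_erase]
      constructor
      · rintro ⟨h1, _, h3, h4⟩
        exact ⟨⟨h1.symm, h3⟩, h4⟩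
      · rintro ⟨⟨h1, h2⟩, h3⟩
        exact ⟨h1.symm, hv, h2, h3⟩
    rw [SimpleGraph.degree, this]
    exact le_antisymm (claim1 v hv) (claim2 v hv)
  have hdeg0 : ∀ v, v ∉ S₀ → G.degree v = 0 := by
    intro v hv
    rw [SimpleGraph.degree, Finset.card_eq_zero]
    ext y
    simp only [SimpleGraph.mem_neighborFinset, Finset.notMem_empty, iff_false]
    rintro ⟨_, h2, _, _⟩
    exact hv h2
  have heven := SimpleGraph.even_card_odd_degree_vertices G
  have : (Finset.univ.filter fun v => Odd (G.degree v)) = S₀ := by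
    ext v
    simp only [Finset.mem_filter, Finset.mem_univ, true_and]
    constructor
    · intro hodd
      by_contra hv
      rw [hdeg0 v hv] at hodd
      simp at hodd
    · intro hv
      rw [hdeg v hv]
      decide
  rw [this, hS₀] at heven
  exact absurd heven (by decide)

lemma twoI_of_triangle_free_13 {x : Fin N} {S : Finset (Fin N)} (hS : S ⊆ cmp C i x)
    (h13 : 13 ≤ S.card) (htf : NoJTriangle C i S) : TwoI C i := by
  obtain ⟨T1, hT1, hc1⟩ := K4_of_triangle_free (C := C) (i := i) (by omega : 9 ≤ S.card) htf
  have h4 : T1.card = 4 := hc1.1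
  have h9 : 9 ≤ (S \ T1).card := by
    rw [Finset.card_sdiff_of_subset hT1]; omega
  have htf' : NoJTriangle C i (S \ T1) := fun a ha b hb c hc =>
    htf a (Finset.sdiff_subset ha) b (Finset.sdiff_subset hb) c (Finset.sdiff_subset hc)
  obtain ⟨T2, hT2, hc2⟩ := K4_of_triangle_free (C := C) (i := i) h9 htf'
  have hdisj : Disjoint T1 T2 := by
    rw [Finset.disjoint_right]
    intro z hz hz'
    exact (Finset.mem_sdiff.1 (hT2 hz)).2 hz'
  exact twoI_of_two_cliques (x := x) (hT1.trans hS) ((hT2.trans Finset.sdiff_subset).trans hS)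
    hc1 hc2 hdisj

end ramsey


section core

open Finset

variable {C : Sym2 (Fin 23) → Bool} {i : Bool}

lemma pick2 {X : Finset (Fin 23)} (h : 2 ≤ X.card) : ∃ x ∈ X, ∃ y ∈ X, x ≠ y := by
  obtain ⟨x, hx, y, hy, hxy⟩ := Finset.one_lt_card.1 (show 1 < X.card by omega)
  exact ⟨x, hx, y, hy, hxy⟩

lemma pick_avoid2 {X : Finset (Fin 23)} (h : 3 ≤ X.card) (y1 y2 : Fin 23) :
    ∃ x ∈ X, x ≠ y1 ∧ x ≠ y2 := by
  by_contra h'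
  push_neg at h'
  have hsub : X ⊆ {y1, y2} := by
    intro x hx
    by_cases h1 : x = y1
    · simp [h1]
    · simp [h' x hx h1]
  have hcc := Finset.card_le_card hsub
  have h2 : ({y1, y2} : Finset (Fin 23)).card ≤ 2 :=
    (Finset.card_insert_le _ _).trans (by simp)
  omega

lemma core {a0 b0 : Fin 23}
    (hA4 : 4 ≤ (cmp C i a0).card) (hB4 : 4 ≤ (cmp C i b0).card)
    (hnr : ¬ Rch C i a0 b0)
    (H1 : ¬ TwoJ C i) (H2 : ¬ TwoI C i)
    (hnuQ : ¬ Nu2 C i (cmp C i b0)) : False := by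
  set P := cmp C i a0 with hP
  set Q := cmp C i b0 with hQ
  set W := (Finset.univ : Finset (Fin 23)) \ (P ∪ Q) with hW
  have memP : ∀ {u}, u ∈ P → Rch C i a0 u := fun {u} hu => mem_cmp.1 hu
  have memQ : ∀ {u}, u ∈ Q → Rch C i b0 u := fun {u} hu => mem_cmp.1 hu
  have memW : ∀ {z}, z ∈ W → ¬ Rch C i a0 z ∧ ¬ Rch C i b0 z := by
    intro z hz
    rw [hW, Finset.mem_sdiff, Finset.mem_union] at hz
    push_neg at hz
    exact ⟨fun h => hz.2.1 (mem_cmp.2 h), fun h => hz.2.2 (mem_cmp.2 h)⟩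
  have jPQ : ∀ {u v}, u ∈ P → v ∈ Q → Pc C (!i) u v :=
    fun {u v} hu hv => pc_cross hnr hu hv
  have jPW : ∀ {u z}, u ∈ P → z ∈ W → Pc C (!i) u z :=
    fun {u z} hu hz => pc_cross (memW hz).1 hu self_mem_cmp
  have jQW : ∀ {u z}, u ∈ Q → z ∈ W → Pc C (!i) u z :=
    fun {u z} hu hz => pc_cross (memW hz).2 hu self_mem_cmp
  have hdPQ : Disjoint P Q := by
    rw [Finset.disjoint_left]
    intro x hx hx'
    exact hnr ((memP hx).trans (memQ hx').symm)
  have hcard : P.card + Q.card + W.card = 23 := by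
    have h1 : (P ∪ Q).card = P.card + Q.card := Finset.card_union_of_disjoint hdPQ
    have h2 : W.card = (Finset.univ : Finset (Fin 23)).card - (P ∪ Q).card := by
      rw [hW, Finset.card_sdiff_of_subset (Finset.subset_univ _)]
    have h3 : (P ∪ Q).card ≤ (Finset.univ : Finset (Fin 23)).card :=
      Finset.card_le_univ _
    have h4 : (Finset.univ : Finset (Fin 23)).card = 23 := by simp
    omega
  by_cases hw2 : 2 ≤ W.card
  · -- REGIME I : at least two outside vertices
    obtain ⟨z1, hz1, z2, hz2, hz12⟩ := pick2 hw2
    have hnuP : ¬ Nu2 C i P := by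
      rintro ⟨u, v, u', v', hu, hv, hu', hv', e1, e2, d1, d2, d3, d4⟩
      obtain ⟨q1, hq1, q2, hq2, hq12⟩ := pick2 (show 2 ≤ Q.card by omega)
      exact H1 (twoJ_of e1 (jPQ hu hq1) (jPW hu hz1) (jPQ hv hq1) (jPW hv hz1)
        (jQW hq1 hz1)
        e2 (jPQ hu' hq2) (jPW hu' hz2) (jPQ hv' hq2) (jPW hv' hz2) (jQW hq2 hz2)
        d1 d2 (jPQ hu hq2).1 (jPW hu hz2).1
        d3 d4 (jPQ hv hq2).1 (jPW hv hz2).1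
        (jPQ hu' hq1).1.symm (jPQ hv' hq1).1.symm hq12 (jQW hq1 hz2).1
        (jPW hu' hz1).1.symm (jPW hv' hz1).1.symm (jQW hq2 hz1).1.symm hz12)
    have hP8 : P.card ≤ 8 := card_le_eight H2 hnuP
    have hQ8 : Q.card ≤ 8 := card_le_eight H2 hnuQ
    have hnuW : ¬ Nu2 C i W := by
      rintro ⟨u, v, u', v', hu, hv, hu', hv', e1, e2, d1, d2, d3, d4⟩
      obtain ⟨p1, hp1, p2, hp2, hp12⟩ := pick2 (show 2 ≤ P.card by omega)
      obtain ⟨q1, hq1, q2, hq2, hq12⟩ := pick2 (show 2 ≤ Q.card by omega)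
      exact H1 (twoJ_of e1 (jPW hp1 hu).symm (jQW hq1 hu).symm (jPW hp1 hv).symm
        (jQW hq1 hv).symm (jPQ hp1 hq1)
        e2 (jPW hp2 hu').symm (jQW hq2 hu').symm (jPW hp2 hv').symm
        (jQW hq2 hv').symm (jPQ hp2 hq2)
        d1 d2 (jPW hp2 hu).1.symm (jQW hq2 hu).1.symm
        d3 d4 (jPW hp2 hv).1.symm (jQW hq2 hv).1.symm
        (jPW hp1 hu').1 (jPW hp1 hv').1 hp12 (jPQ hp1 hq2).1
        (jQW hq1 hu').1 (jQW hq1 hv').1 (jPQ hp2 hq1).1.symm hq12)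
    have hW8 : W.card ≤ 8 := card_le_eight H2 hnuW
    have hw78 : W.card = 7 ∨ W.card = 8 := by omega
    rcases hw78 with hw7 | hw8
    · have hp8 : P.card = 8 := by omega
      have hq8 : Q.card = 8 := by omega
      have hfP : HasJedge C i P := by
        by_contra h
        have := card_le_seven H2 h
        omega
      have hfQ : HasJedge C i Q := by
        by_contra h
        have := card_le_seven H2 h
        omega
      obtain ⟨f1, f2, hf1, hf2, hf⟩ := hfP
      obtain ⟨g1, g2, hg1, hg2, hg⟩ := hfQ
      obtain ⟨u, hu, hu1, hu2⟩ := pick_avoid2 (show 3 ≤ Q.card by omega) g1 g2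
      obtain ⟨u', hu', hu'1, hu'2⟩ := pick_avoid2 (show 3 ≤ P.card by omega) f1 f2
      exact H1 (twoJ_of hf (jPQ hf1 hu) (jPW hf1 hz1) (jPQ hf2 hu) (jPW hf2 hz1)
        (jQW hu hz1)
        hg (jPQ hu' hg1).symm (jQW hg1 hz2) (jPQ hu' hg2).symm (jQW hg2 hz2)
        (jPW hu' hz2)
        (jPQ hf1 hg1).1 (jPQ hf1 hg2).1 hu'1.symm (jPW hf1 hz2).1
        (jPQ hf2 hg1).1 (jPQ hf2 hg2).1 hu'2.symm (jPW hf2 hz2).1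
        hu1 hu2 (jPQ hu' hu).1.symm (jQW hu hz2).1
        (jQW hg1 hz1).1.symm (jQW hg2 hz1).1.symm (jPW hu' hz1).1.symm hz12)
    · have hfW : HasJedge C i W := by
        by_contra h
        have := card_le_seven H2 h
        omega
      obtain ⟨u0, v0, hu0, hv0, he0⟩ := hfW
      obtain ⟨z3, hz3, hz3u, hz3v⟩ := pick_avoid2 (show 3 ≤ W.card by omega) u0 v0
      have hpq : P.card = 8 ∨ Q.card = 8 := by omega
      rcases hpq with hp8 | hq8
      · have hfP : HasJedge C i P := by
          by_contra h
          have := card_le_seven H2 h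
          omega
        obtain ⟨f1, f2, hf1, hf2, hf⟩ := hfP
        obtain ⟨p1, hp1, hp11, hp12'⟩ := pick_avoid2 (show 3 ≤ P.card by omega) f1 f2
        obtain ⟨q1, hq1, q2, hq2, hq12⟩ := pick2 (show 2 ≤ Q.card by omega)
        exact H1 (twoJ_of he0 (jPW hp1 hu0).symm (jQW hq1 hu0).symm (jPW hp1 hv0).symm
          (jQW hq1 hv0).symm (jPQ hp1 hq1)
          hf (jPQ hf1 hq2) (jPW hf1 hz3) (jPQ hf2 hq2) (jPW hf2 hz3) (jQW hq2 hz3)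
          (jPW hf1 hu0).1.symm (jPW hf2 hu0).1.symm (jQW hq2 hu0).1.symm hz3u.symm
          (jPW hf1 hv0).1.symm (jPW hf2 hv0).1.symm (jQW hq2 hv0).1.symm hz3v.symm
          hp11 hp12' (jPQ hp1 hq2).1 (jPW hp1 hz3).1
          (jPQ hf1 hq1).1.symm (jPQ hf2 hq1).1.symm hq12 (jQW hq1 hz3).1)
      · have hfQ : HasJedge C i Q := by
          by_contra h
          have := card_le_seven H2 h
          omega
        obtain ⟨g1, g2, hg1, hg2, hg⟩ := hfQ
        obtain ⟨q1, hq1, hq11, hq12'⟩ := pick_avoid2 (show 3 ≤ Q.card by omega) g1 g2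
        obtain ⟨p1, hp1, p2, hp2, hp12⟩ := pick2 (show 2 ≤ P.card by omega)
        exact H1 (twoJ_of he0 (jPW hp1 hu0).symm (jQW hq1 hu0).symm (jPW hp1 hv0).symm
          (jQW hq1 hv0).symm (jPQ hp1 hq1)
          hg (jPQ hp2 hg1).symm (jQW hg1 hz3) (jPQ hp2 hg2).symm (jQW hg2 hz3)
          (jPW hp2 hz3)
          (jQW hg1 hu0).1.symm (jQW hg2 hu0).1.symm (jPW hp2 hu0).1.symm hz3u.symm
          (jQW hg1 hv0).1.symm (jQW hg2 hv0).1.symm (jPW hp2 hv0).1.symm hz3v.symm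
          (jPQ hp1 hg1).1 (jPQ hp1 hg2).1 hp12 (jPW hp1 hz3).1
          hq11 hq12' (jPQ hp2 hq1).1.symm (jQW hq1 hz3).1)
  · -- REGIME II : at most one outside vertex
    have hw1 : W.card ≤ 1 := by omega
    have hQ8 : Q.card ≤ 8 := card_le_eight H2 hnuQ
    have hp14 : 14 ≤ P.card := by omega
    have hTT : ¬ (∃ a b c a' b' c' : Fin 23, a ∈ P ∧ b ∈ P ∧ c ∈ P ∧
        a' ∈ P ∧ b' ∈ P ∧ c' ∈ P ∧
        Pc C (!i) a b ∧ Pc C (!i) a c ∧ Pc C (!i) b c ∧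
        Pc C (!i) a' b' ∧ Pc C (!i) a' c' ∧ Pc C (!i) b' c' ∧
        a ≠ a' ∧ a ≠ b' ∧ a ≠ c' ∧ b ≠ a' ∧ b ≠ b' ∧ b ≠ c' ∧
        c ≠ a' ∧ c ≠ b' ∧ c ≠ c') := by
      rintro ⟨a, b, c, a', b', c', ha, hb, hc, ha', hb', hc',
        p1, p2, p3, p1', p2', p3', d1, d2, d3, d4, d5, d6, d7, d8, d9⟩
      obtain ⟨v1, hv1, v2, hv2, hv12⟩ := pick2 (show 2 ≤ Q.card by omega)
      exact H1 (twoJ_of p1 p2 (jPQ ha hv1) p3 (jPQ hb hv1) (jPQ hc hv1)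
        p1' p2' (jPQ ha' hv2) p3' (jPQ hb' hv2) (jPQ hc' hv2)
        d1 d2 d3 (jPQ ha hv2).1 d4 d5 d6 (jPQ hb hv2).1 d7 d8 d9 (jPQ hc hv2).1
        (jPQ ha' hv1).1.symm (jPQ hb' hv1).1.symm (jPQ hc' hv1).1.symm hv12)
    by_cases hPT : NoJTriangle C i P
    · exact H2 (twoI_of_triangle_free_13 (x := a0) (by rw [hP] : P ⊆ cmp C i a0)
        (by omega) hPT)
    · unfold NoJTriangle at hPT
      push_neg at hPT
      obtain ⟨a, ha, b, hb, c, hc, p1, p2, p3⟩ := hPT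
      by_cases hE : ∃ e1 e2, e1 ∈ P ∧ e2 ∈ P ∧ Pc C (!i) e1 e2 ∧
          e1 ≠ a ∧ e1 ≠ b ∧ e1 ≠ c ∧ e2 ≠ a ∧ e2 ≠ b ∧ e2 ≠ c
      · obtain ⟨e1, e2, he1, he2, he, d1, d2, d3, d4, d5, d6⟩ := hE
        by_cases hWn : W.Nonempty
        · obtain ⟨z, hz⟩ := hWn
          obtain ⟨x1, hx1, x2, hx2, hx12⟩ := pick2 (show 2 ≤ Q.card by omega)
          exact H1 (twoJ_of p1 p2 (jPQ ha hx1) p3 (jPQ hb hx1) (jPQ hc hx1)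
            he (jPQ he1 hx2) (jPW he1 hz) (jPQ he2 hx2) (jPW he2 hz) (jQW hx2 hz)
            d1.symm d4.symm (jPQ ha hx2).1 (jPW ha hz).1
            d2.symm d5.symm (jPQ hb hx2).1 (jPW hb hz).1
            d3.symm d6.symm (jPQ hc hx2).1 (jPW hc hz).1
            (jPQ he1 hx1).1.symm (jPQ he2 hx1).1.symm hx12 (jQW hx1 hz).1)
        · by_cases hfQ : HasJedge C i Q
          · obtain ⟨g1, g2, hg1, hg2, hg⟩ := hfQ
            obtain ⟨x, hx, hxg1, hxg2⟩ := pick_avoid2 (show 3 ≤ Q.card by omega) g1 g2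
            exact H1 (twoJ_of p1 p2 (jPQ ha hx) p3 (jPQ hb hx) (jPQ hc hx)
              he (jPQ he1 hg1) (jPQ he1 hg2) (jPQ he2 hg1) (jPQ he2 hg2) hg
              d1.symm d4.symm (jPQ ha hg1).1 (jPQ ha hg2).1
              d2.symm d5.symm (jPQ hb hg1).1 (jPQ hb hg2).1
              d3.symm d6.symm (jPQ hc hg1).1 (jPQ hc hg2).1
              (jPQ he1 hx).1.symm (jPQ he2 hx).1.symm hxg1 hxg2)
          · -- Q has no j-edge, so q ≤ 7 and p ≥ 16 (W must be empty here)
            have hq7 : Q.card ≤ 7 := card_le_seven H2 hfQ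
            have hw0 : W.card = 0 := by
              rcases Finset.eq_empty_or_nonempty W with hemp | hne
              · rw [hemp]; simp
              · exact absurd hne hWn
            have hp16 : 16 ≤ P.card := by omega
            have habc : ({a, b, c} : Finset (Fin 23)) ⊆ P := by
              intro z hz'
              simp only [Finset.mem_insert, Finset.mem_singleton] at hz'
              rcases hz' with rfl | rfl | rfl <;> assumption
            have hS13 : 13 ≤ (P \ {a, b, c}).card := by
              have h3 : ({a, b, c} : Finset (Fin 23)).card ≤ 3 :=
                (Finset.card_insert_le _ _).trans (by
                  have := Finset.card_insert_le b ({c} : Finset (Fin 23))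
                  simp at this ⊢
                  omega)
              rw [Finset.card_sdiff_of_subset habc]
              omega
            have hmemS : ∀ {z}, z ∈ P \ ({a, b, c} : Finset (Fin 23)) →
                z ∈ P ∧ z ≠ a ∧ z ≠ b ∧ z ≠ c := by
              intro z hz'
              rw [Finset.mem_sdiff] at hz'
              simp only [Finset.mem_insert, Finset.mem_singleton] at hz'
              push_neg at hz'
              exact ⟨hz'.1, hz'.2.1, hz'.2.2.1, hz'.2.2.2⟩
            have htf : NoJTriangle C i (P \ {a, b, c}) := by
              rintro x hx y hy z hz ⟨t1, t2, t3⟩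
              obtain ⟨hxP, hxa, hxb, hxc⟩ := hmemS hx
              obtain ⟨hyP, hya, hyb, hyc⟩ := hmemS hy
              obtain ⟨hzP, hza, hzb, hzc⟩ := hmemS hz
              exact hTT ⟨a, b, c, x, y, z, ha, hb, hc, hxP, hyP, hzP,
                p1, p2, p3, t1, t2, t3, hxa.symm, hya.symm, hza.symm,
                hxb.symm, hyb.symm, hzb.symm, hxc.symm, hyc.symm, hzc.symm⟩
            exact H2 (twoI_of_triangle_free_13 (x := a0)
              ((Finset.sdiff_subset).trans (by rw [hP] : P ⊆ cmp C i a0)) hS13 htf)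
      · -- every j-edge of P meets {a, b, c}
        push_neg at hE
        apply H2
        apply twoI_of_pairwise (X := P \ {a, b, c})
        · intro u hu v hv huv
          rw [Finset.mem_sdiff] at hu hv
          simp only [Finset.mem_insert, Finset.mem_singleton] at hu hv
          push_neg at hu hv
          rcases color_dichotomy (C := C) (i := i) s(u, v) with hcol | hcol
          · exact hcol
          · exact absurd (hE u v hu.1 hv.1 ⟨huv, hcol⟩ hu.2.1 hu.2.2.1 hu.2.2.2
              hv.2.1 hv.2.2.1) hv.2.2.2
        · have habc : ({a, b, c} : Finset (Fin 23)) ⊆ P := by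
            intro z hz'
            simp only [Finset.mem_insert, Finset.mem_singleton] at hz'
            rcases hz' with rfl | rfl | rfl <;> assumption
          have h3 : ({a, b, c} : Finset (Fin 23)).card ≤ 3 :=
            (Finset.card_insert_le _ _).trans (by
              have := Finset.card_insert_le b ({c} : Finset (Fin 23))
              simp at this ⊢
              omega)
          rw [Finset.card_sdiff_of_subset habc]
          omega

end core


section outer

variable {C : Sym2 (Fin 23) → Bool} {i : Bool}

lemma conn_of_twoI (h : TwoI C i) : HasConnCliqueMatching C 2 4 := by
  obtain ⟨S, T, cS, cT, hd, s, hs, t, ht, hst⟩ := h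
  have hRS : ∀ u ∈ S, ∀ v ∈ S, Rch C i u v := by
    intro u hu v hv
    by_cases huv : u = v
    · exact huv ▸ SimpleGraph.Reachable.refl u
    · exact rch_of_pc ⟨huv, cS.2 u hu v hv huv⟩
  have hRT : ∀ u ∈ T, ∀ v ∈ T, Rch C i u v := by
    intro u hu v hv
    by_cases huv : u = v
    · exact huv ▸ SimpleGraph.Reachable.refl u
    · exact rch_of_pc ⟨huv, cT.2 u hu v hv huv⟩
  have hcross : ∀ u ∈ S, ∀ v ∈ T, Rch C i u v := by
    intro u hu v hv
    exact (hRS u hu s hs).trans (hst.trans (hRT t ht v hv))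
  refine ⟨i, fun j => if j = 0 then S else T, ?_, ?_, ?_⟩
  · intro j
    by_cases hj : j = 0 <;> simp only [hj, if_true, if_false] <;> simp [cS, cT, hj]
  · intro j l hjl
    fin_cases j <;> fin_cases l <;> simp_all [hd, hd.symm]
  · rintro u v ⟨ju, hu⟩ ⟨jv, hv⟩
    have hu' : u ∈ S ∨ u ∈ T := by
      by_cases h : ju = 0
      · rw [h] at hu; simp at hu; exact Or.inl hu
      · simp [h] at hu; exact Or.inr hu
    have hv' : v ∈ S ∨ v ∈ T := by
      by_cases h : jv = 0
      · rw [h] at hv; simp at hv; exact Or.inl hv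
      · simp [h] at hv; exact Or.inr hv
    rcases hu' with hu' | hu' <;> rcases hv' with hv' | hv'
    · exact hRS u hu' v hv'
    · exact hcross u hu' v hv'
    · exact (hcross v hv' u hu').symm
    · exact hRT u hu' v hv'

lemma j_connected {a0 b0 : Fin 23} (hnr : ¬ Rch C i a0 b0) :
    ∀ u v : Fin 23, (colorGraph C (!i)).Reachable u v := by
  intro u v
  by_cases huv : u = v
  · exact huv ▸ SimpleGraph.Reachable.refl u
  by_cases hR : Rch C i u v
  · have hc : ∃ c, ¬ Rch C i u c ∧ ¬ Rch C i v c := by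
      by_cases ha : Rch C i u a0
      · exact ⟨b0, fun h => hnr (ha.symm.trans h),
          fun h => hnr (ha.symm.trans (hR.trans h))⟩
      · exact ⟨a0, ha, fun h => ha (hR.trans h)⟩
    obtain ⟨c, hc1, hc2⟩ := hc
    exact (rch_of_pc (pc_of_not_rch hc1)).trans (rch_of_pc (pc_of_not_rch hc2)).symm
  · exact rch_of_pc (pc_of_not_rch hR)

lemma conn_of_twoJ {a0 b0 : Fin 23} (hnr : ¬ Rch C i a0 b0) (h : TwoJ C i) :
    HasConnCliqueMatching C 2 4 := by
  obtain ⟨S, T, cS, cT, hd⟩ := h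
  refine ⟨!i, fun j => if j = 0 then S else T, ?_, ?_, ?_⟩
  · intro j
    by_cases hj : j = 0 <;> simp only [hj, if_true, if_false] <;> simp [cS, cT, hj]
  · intro j l hjl
    fin_cases j <;> fin_cases l <;> simp_all [hd, hd.symm]
  · intro u v _ _
    exact j_connected hnr u v

lemma clique_subset_cmp {A : Finset (Fin 23)} (hA : IsMonoClique C i 4 A)
    {a0 : Fin 23} (ha0 : a0 ∈ A) : A ⊆ cmp C i a0 := by
  intro x hx
  rw [mem_cmp]
  by_cases h : a0 = x
  · exact h ▸ SimpleGraph.Reachable.refl a0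
  · exact rch_of_pc ⟨h, hA.2 a0 ha0 x hx h⟩

lemma upper (h : ∀ C : Sym2 (Fin 23) → Bool, ∃ i, ∃ f : Fin 2 → Finset (Fin 23),
      (∀ j, IsMonoClique C i 4 (f j)) ∧ ∀ j l, j ≠ l → Disjoint (f j) (f l))
    (C : Sym2 (Fin 23) → Bool) : HasConnCliqueMatching C 2 4 := by
  obtain ⟨i, f, hcl, hdisj⟩ := h C
  have hA := hcl 0
  have hB := hcl 1
  have hAB : Disjoint (f 0) (f 1) := hdisj 0 1 (by decide)
  obtain ⟨a0, ha0⟩ := Finset.card_pos.1 (show 0 < (f 0).card by rw [hA.1]; omega)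
  obtain ⟨b0, hb0⟩ := Finset.card_pos.1 (show 0 < (f 1).card by rw [hB.1]; omega)
  by_cases hr : Rch C i a0 b0
  · exact conn_of_twoI ⟨f 0, f 1, hA, hB, hAB, a0, ha0, b0, hb0, hr⟩
  by_cases hI : TwoI C i
  · exact conn_of_twoI hI
  by_cases hJ : TwoJ C i
  · exact conn_of_twoJ hr hJ
  exfalso
  have hA4 : 4 ≤ (cmp C i a0).card := by
    have hcc := Finset.card_le_card (clique_subset_cmp hA ha0)
    rw [hA.1] at hcc
    exact hcc
  have hB4 : 4 ≤ (cmp C i b0).card := by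
    have hcc := Finset.card_le_card (clique_subset_cmp hB hb0)
    rw [hB.1] at hcc
    exact hcc
  by_cases hnuQ : Nu2 C i (cmp C i b0)
  · by_cases hnuP : Nu2 C i (cmp C i a0)
    · obtain ⟨u, v, u', v', hu, hv, hu', hv', e1, e2, d1, d2, d3, d4⟩ := hnuP
      obtain ⟨x, y, x', y', hx, hy, hx', hy', f1, f2, g1, g2, g3, g4⟩ := hnuQ
      exact hJ (twoJ_of e1 (pc_cross hr hu hx) (pc_cross hr hu hy) (pc_cross hr hv hx)
        (pc_cross hr hv hy) f1
        e2 (pc_cross hr hu' hx') (pc_cross hr hu' hy') (pc_cross hr hv' hx')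
        (pc_cross hr hv' hy') f2
        d1 d2 (pc_cross hr hu hx').1 (pc_cross hr hu hy').1
        d3 d4 (pc_cross hr hv hx').1 (pc_cross hr hv hy').1
        (pc_cross hr hu' hx).1.symm (pc_cross hr hv' hx).1.symm g1 g2
        (pc_cross hr hu' hy).1.symm (pc_cross hr hv' hy).1.symm g3 g4)
    · exact core hB4 hA4 (fun hh => hr hh.symm) hJ hI hnuP
  · exact core hA4 hB4 hr hJ hI hnuQ

end outer


section lower

lemma lower_bound {N : ℕ} (hN : N ≤ 22) :
    ∃ C : Sym2 (Fin N) → Bool, ¬ HasConnCliqueMatching C 2 4 := by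
  have hcomm : ∀ u v : Fin N,
      (decide ((u : ℕ) / 7 = (v : ℕ) / 7)) = (decide ((v : ℕ) / 7 = (u : ℕ) / 7)) := by
    intro u v
    simp [eq_comm]
  set Cc : Sym2 (Fin N) → Bool :=
    Sym2.lift ⟨fun u v => decide ((u : ℕ) / 7 = (v : ℕ) / 7), hcomm⟩ with hCc
  refine ⟨Cc, ?_⟩
  have hCuv : ∀ u v : Fin N, Cc s(u, v) = decide ((u : ℕ) / 7 = (v : ℕ) / 7) :=
    fun u v => by rw [hCc]; exact Sym2.lift_mk _ u v
  rintro ⟨i, f, hcl, hdisj, hconn⟩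
  have hAB : Disjoint (f 0) (f 1) := hdisj 0 1 (by decide)
  cases i with
  | true =>
    have hqe : ∀ u v : Fin N, (colorGraph Cc true).Reachable u v →
        (u : ℕ) / 7 = (v : ℕ) / 7 := by
      intro u v h
      obtain ⟨w⟩ := h
      induction w with
      | nil => rfl
      | cons h p ih =>
        have h2 := h.2
        rw [hCuv] at h2
        exact (of_decide_eq_true h2).trans ih
    obtain ⟨a, ha⟩ := Finset.card_pos.1 (show 0 < (f 0).card by rw [(hcl 0).1]; omega)
    have hsub : f 0 ∪ f 1 ⊆ Finset.univ.filter (fun x => (x : ℕ) / 7 = (a : ℕ) / 7) := by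
      intro x hx
      rw [Finset.mem_filter]
      refine ⟨Finset.mem_univ _, ?_⟩
      rw [Finset.mem_union] at hx
      rcases hx with hx | hx
      · exact (hqe a x (hconn a x ⟨0, ha⟩ ⟨0, hx⟩)).symm
      · exact (hqe a x (hconn a x ⟨0, ha⟩ ⟨1, hx⟩)).symm
    have hblk : (Finset.univ.filter (fun x : Fin N => (x : ℕ) / 7 = (a : ℕ) / 7)).card ≤ 7 := by
      have hle := Finset.card_le_card_of_injOn
        (s := Finset.univ.filter (fun x : Fin N => (x : ℕ) / 7 = (a : ℕ) / 7))
        (fun x : Fin N => (x : ℕ))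
        (t := Finset.Ico (7 * ((a : ℕ) / 7)) (7 * ((a : ℕ) / 7) + 7)) ?_ ?_
      · rw [Nat.card_Ico] at hle
        omega
      · intro x hx
        rw [Finset.mem_coe, Finset.mem_filter] at hx
        rw [Finset.mem_coe, Finset.mem_Ico]
        show 7 * ((a : ℕ) / 7) ≤ (x : ℕ) ∧ (x : ℕ) < 7 * ((a : ℕ) / 7) + 7
        have hx2 := hx.2
        omega
      · intro x _ y _ hxy
        exact Fin.val_injective hxy
    have h8 : (f 0 ∪ f 1).card = 8 := by
      rw [Finset.card_union_of_disjoint hAB, (hcl 0).1, (hcl 1).1]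
    have hcc := Finset.card_le_card hsub
    omega
  | false =>
    have hval : ∀ j : Fin 2, ∃ x ∈ f j, (x : ℕ) = 21 := by
      intro j
      have hinj : Set.InjOn (fun x : Fin N => (x : ℕ) / 7) (f j) := by
        intro u hu v hv huv
        by_contra hne
        have hc := (hcl j).2 u hu v hv hne
        rw [hCuv] at hc
        exact (of_decide_eq_false hc) huv
      have himg : ((f j).image (fun x : Fin N => (x : ℕ) / 7)).card = 4 := by
        rw [Finset.card_image_of_injOn hinj, (hcl j).1]
      have hsubr : (f j).image (fun x : Fin N => (x : ℕ) / 7) ⊆ Finset.range 4 := by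
        intro k hk
        rw [Finset.mem_image] at hk
        obtain ⟨x, hx, rfl⟩ := hk
        rw [Finset.mem_range]
        have := x.isLt
        omega
      have heq : (f j).image (fun x : Fin N => (x : ℕ) / 7) = Finset.range 4 :=
        Finset.eq_of_subset_of_card_le hsubr (by rw [himg, Finset.card_range])
      have h3 : (3 : ℕ) ∈ (f j).image (fun x : Fin N => (x : ℕ) / 7) := by
        rw [heq]
        simp
      rw [Finset.mem_image] at h3
      obtain ⟨x, hx, hx3⟩ := h3
      refine ⟨x, hx, ?_⟩
      have := x.isLt
      omega
    obtain ⟨x0, hx0, hv0⟩ := hval 0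
    obtain ⟨x1, hx1, hv1⟩ := hval 1
    have hx01 : x0 = x1 := Fin.val_injective (by omega)
    exact Finset.disjoint_left.1 hAB hx0 (hx01 ▸ hx1)

end lower

end RamseyAux

/-- If `R₂(2K₄) ≤ 23`, i.e. every red/blue coloring of `K₂₃` contains two pairwise
vertex-disjoint copies of `K₄` in the same color, then `R₂(c(2K₄)) = 23`: the number `23` is
the least `N` such that every red/blue edge-coloring of the complete graph on `N` vertices
contains a monochromatic connected `2K₄`-matching. -/
theorem ramsey_connected_2K4
    (h : ∀ C : Sym2 (Fin 23) → Bool, ∃ i : Bool, HasMonoCliqueMatching C i 2 4) :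
    IsLeast {N : ℕ | ∀ C : Sym2 (Fin N) → Bool, HasConnCliqueMatching C 2 4} 23 := by
  constructor
  · intro C
    exact RamseyAux.upper (fun C' => by
      obtain ⟨i, f, hcl, hd⟩ := h C'
      exact ⟨i, f, hcl, hd⟩) C
  · intro n hn
    by_contra hlt
    push_neg at hlt
    obtain ⟨C, hC⟩ := RamseyAux.lower_bound (N := n) (by omega)
    exact hC (hn C)
end

section
/- For all integers r ≥ 3 and n ≥ 2, there exists a red/blue edge-coloring of the complete graph on (r² - r + 1)n - r vertices that contains no monochromatic connected nK_r-matching; consequently R₂(c(nK_r)) ≥ (r² - r + 1)n - r + 1. -/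
/-- the partition coloring -/
def myColor (r n N : ℕ) : Sym2 (Fin N) → Bool :=
  Sym2.lift ⟨fun u v => decide (u.val / (r * n - 1) = v.val / (r * n - 1) ∧
      u.val / (r * n - 1) ≤ r - 2),
    fun u v => by
      apply decide_eq_decide.mpr
      constructor
      · rintro ⟨h1, h2⟩; exact ⟨h1.symm, h1 ▸ h2⟩
      · rintro ⟨h1, h2⟩; exact ⟨h1.symm, h1 ▸ h2⟩⟩

lemma myColor_true_iff {r n N : ℕ} {u v : Fin N} :
    myColor r n N s(u, v) = true ↔
      (u.val / (r * n - 1) = v.val / (r * n - 1) ∧ u.val / (r * n - 1) ≤ r - 2) := by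
  simp [myColor]

lemma arith (r n : ℕ) (hr : 3 ≤ r) (hn : 2 ≤ n) :
    (r ^ 2 - r + 1) * n - r ≤ (r - 1) * (r * n - 1) + (n - 1) := by
  have h6 : 2 * r ≤ r ^ 2 := by
    rw [pow_two]; exact Nat.mul_le_mul (by omega) le_rfl
  have h1 : r ≤ r ^ 2 := by omega
  have h7 : r ≤ r ^ 2 - r + 1 := by omega
  have h5 : r ≤ (r ^ 2 - r + 1) * n := by
    calc r ≤ r * n := Nat.le_mul_of_pos_right r (by omega)
    _ ≤ (r ^ 2 - r + 1) * n := Nat.mul_le_mul h7 le_rfl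
  have h2 : 1 ≤ r * n := by
    have : 1 * 1 ≤ r * n := Nat.mul_le_mul (by omega) (by omega)
    omega
  zify [h5, h1, h2, (show 1 ≤ n by omega), (show 1 ≤ r by omega)]
  exact le_of_eq (by ring)

lemma no_mono (r n N : ℕ) (hr : 3 ≤ r) (hn : 2 ≤ n)
    (hNle : N ≤ (r - 1) * (r * n - 1) + (n - 1)) :
    ¬ HasConnCliqueMatching (myColor r n N) n r := by
  set m := r * n - 1 with hm'
  have hrn : 6 ≤ r * n := by
    have : 3 * 2 ≤ r * n := Nat.mul_le_mul hr hn
    omega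
  have hm : 0 < m := by omega
  rintro ⟨i, f, hclique, hdisj, hconn⟩
  cases i with
  | true =>
    -- red case: all cliques lie in one part of size ≤ m < r*n
    have reach_q : ∀ u v : Fin N, (colorGraph (myColor r n N) true).Reachable u v →
        u.val / m = v.val / m := by
      intro u v h
      obtain ⟨w⟩ := h
      induction w with
      | nil => rfl
      | cons h' p ih =>
        have hc := myColor_true_iff.mp h'.2
        exact hc.1.trans ih
    classical
    set T : Finset (Fin N) := Finset.univ.biUnion f with hT
    have cardT : T.card = n * r := by
      rw [hT, Finset.card_biUnion (fun x _ y _ hxy => hdisj x y hxy)]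
      rw [Finset.sum_congr rfl (fun j _ => (hclique j).1)]
      simp [Finset.card_univ]
    obtain ⟨u0, hu0⟩ := Finset.card_pos.mp
      (show 0 < (f ⟨0, by omega⟩).card by rw [(hclique ⟨0, by omega⟩).1]; omega)
    have hq : ∀ v ∈ T, v.val / m = u0.val / m := by
      intro v hv
      rw [hT, Finset.mem_biUnion] at hv
      obtain ⟨j, _, hvj⟩ := hv
      exact (reach_q _ _ (hconn u0 v ⟨_, hu0⟩ ⟨j, hvj⟩)).symm
    have cardle : T.card ≤ m := by
      have h := Finset.card_le_card_of_injOn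
        (f := fun v : Fin N => (⟨v.val % m, Nat.mod_lt _ hm⟩ : Fin m))
        (s := T) (t := Finset.univ) (fun a _ => Finset.mem_univ _) ?_
      · simpa using h
      · intro a ha b hb hab
        have hq2 : a.val % m = b.val % m := congrArg Fin.val hab
        have hq1 : a.val / m = b.val / m := by
          rw [hq a (by simpa using ha), hq b (by simpa using hb)]
        apply Fin.ext
        calc a.val = m * (a.val / m) + a.val % m := (Nat.div_add_mod _ _).symm
          _ = m * (b.val / m) + b.val % m := by rw [hq1, hq2]
          _ = b.val := Nat.div_add_mod _ _
    rw [cardT] at cardle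
    have : n * r = r * n := Nat.mul_comm n r
    omega
  | false =>
    -- blue case: each clique has a vertex in the leftover part of size n-1
    have hbig : ∀ j, ∃ x ∈ f j, r - 1 ≤ x.val / m := by
      intro j
      by_contra hcon
      push_neg at hcon
      have hinj : Set.InjOn (fun v : Fin N => v.val / m) (f j) := by
        intro a ha b hb hab
        by_contra hne
        have hcol := (hclique j).2 a ha b hb hne
        have : myColor r n N s(a, b) = true :=
          myColor_true_iff.mpr ⟨hab, by rw [← hm']; have := hcon a ha; omega⟩
        rw [hcol] at this
        exact Bool.false_ne_true this
      classical
      have himg : ((f j).image (fun v => v.val / m)).card = r :=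
        (Finset.card_image_of_injOn hinj).trans (hclique j).1
      have hsub : (f j).image (fun v => v.val / m) ⊆ Finset.range (r - 1) := by
        intro x hx
        simp only [Finset.mem_image] at hx
        obtain ⟨v, hv, rfl⟩ := hx
        exact Finset.mem_range.mpr (hcon v hv)
      have := Finset.card_le_card hsub
      rw [himg, Finset.card_range] at this
      omega
    choose v hv hvq using hbig
    have hA : ∀ j, (r - 1) * m ≤ (v j).val :=
      fun j => (Nat.le_div_iff_mul_le hm).mp (hvq j)
    have hub : ∀ j, (v j).val - (r - 1) * m < n - 1 := by
      intro j
      have h1 := (v j).isLt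
      have h2 := hA j
      omega
    have ginj : Function.Injective
        (fun j : Fin n => (⟨(v j).val - (r - 1) * m, hub j⟩ : Fin (n - 1))) := by
      intro j l hjl
      have hval : (v j).val - (r - 1) * m = (v l).val - (r - 1) * m := congrArg Fin.val hjl
      have heq : v j = v l := Fin.ext (by have := hA j; have := hA l; omega)
      by_contra hne
      have hmem : v j ∈ f l := by rw [heq]; exact hv l
      exact (Finset.disjoint_left.mp (hdisj j l hne) (hv j)) hmem
    have := Fintype.card_le_of_injective _ ginj
    simp only [Fintype.card_fin] at this
    omega

lemma transfer {M N : ℕ} (h : M ≤ N) (C : Sym2 (Fin N) → Bool) (n r : ℕ)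
    (H : HasConnCliqueMatching (fun e => C (e.map (Fin.castLE h))) n r) :
    HasConnCliqueMatching C n r := by
  obtain ⟨i, f, h1, h2, h3⟩ := H
  refine ⟨i, fun j => (f j).map (Fin.castLEEmb h), ?_, ?_, ?_⟩
  · intro j
    refine ⟨by rw [Finset.card_map]; exact (h1 j).1, ?_⟩
    rintro u hu w hw huw
    simp only [Finset.mem_map] at hu hw
    obtain ⟨a, ha, rfl⟩ := hu
    obtain ⟨b, hb, rfl⟩ := hw
    have hab : a ≠ b := by rintro rfl; exact huw rfl
    have hc := (h1 j).2 a ha b hb hab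
    simpa [Fin.castLEEmb, Sym2.map_pair_eq] using hc
  · intro j l hjl
    rw [Finset.disjoint_map]
    exact h2 j l hjl
  · intro u w hu hw
    obtain ⟨j, hu⟩ := hu
    obtain ⟨l, hw⟩ := hw
    simp only [Finset.mem_map] at hu hw
    obtain ⟨a, ha, rfl⟩ := hu
    obtain ⟨b, hb, rfl⟩ := hw
    have hhom : ∀ {x y : Fin M}, (colorGraph (fun e => C (e.map (Fin.castLE h))) i).Adj x y →
        (colorGraph C i).Adj (Fin.castLE h x) (Fin.castLE h y) := by
      rintro x y ⟨hne, hc⟩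
      exact ⟨fun hh => hne (by simpa using hh), by simpa [Sym2.map_pair_eq] using hc⟩
    have hre := (h3 a b ⟨j, ha⟩ ⟨l, hb⟩).map
      (⟨Fin.castLE h, hhom⟩ : colorGraph (fun e => C (e.map (Fin.castLE h))) i →g colorGraph C i)
    simp only [Fin.coe_castLEEmb]
    exact hre


/-- **Lower bound.** For all `r ≥ 3` and `n ≥ 2`, there is a red/blue edge-coloring of the
complete graph on `(r² - r + 1)n - r` vertices with no monochromatic connected
`nK_r`-matching; consequently `R₂(c(nK_r)) ≥ (r² - r + 1)n - r + 1`. -/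
theorem ramsey_connected_matching_lower_bound (r n : ℕ) (hr : 3 ≤ r) (hn : 2 ≤ n) :
    (∃ C : Sym2 (Fin ((r ^ 2 - r + 1) * n - r)) → Bool, ¬ HasConnCliqueMatching C n r) ∧
    ∀ R : ℕ,
      IsLeast {N : ℕ | ∀ C : Sym2 (Fin N) → Bool, HasConnCliqueMatching C n r} R →
      (r ^ 2 - r + 1) * n - r + 1 ≤ R := by
  have key : ∀ M : ℕ, M ≤ (r ^ 2 - r + 1) * n - r →
      ¬ HasConnCliqueMatching (myColor r n M) n r :=
    fun M hM => no_mono r n M hr hn (hM.trans (arith r n hr hn))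
  constructor
  · exact ⟨myColor r n _, key _ le_rfl⟩
  · intro R hR
    by_contra hcon
    push_neg at hcon
    have hRle : R ≤ (r ^ 2 - r + 1) * n - r := by omega
    exact key _ le_rfl (transfer hRle (myColor r n _) n r
      (hR.1 (fun e => myColor r n _ (e.map (Fin.castLE hRle)))))
end

section
/- For all integers m ≥ 1 and k ≥ 1, R(mK₂, (k+1)K₄) = 3k + 2m + 2 if k < m - 1, and R(mK₂, (k+1)K₄) = 4k + m + 3 if k ≥ m - 1; moreover, the two expressions agree when k = m - 1. -/
lemma isMonoClique_pair {N : ℕ} (C : Sym2 (Fin N) → Bool) (i : Bool) {x u : Fin N}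
    (hxu : x ≠ u) (h : C s(x, u) = i) : IsMonoClique C i 2 {x, u} := by
  refine ⟨Finset.card_pair hxu, ?_⟩
  intro a ha b hb hab
  simp only [Finset.mem_insert, Finset.mem_singleton] at ha hb
  rcases ha with rfl | rfl <;> rcases hb with rfl | rfl <;>
    first
      | exact absurd rfl hab
      | exact h
      | (rw [Sym2.eq_swap]; exact h)

lemma greedy {N : ℕ} (C : Sym2 (Fin N) → Bool) :
    ∀ (n p : ℕ) (U : Finset (Fin N)) (y w : Fin p → Fin N),
    (∀ u ∈ U, ∀ v ∈ U, u ≠ v → C s(u, v) = false) →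
    (∀ j, y j ∉ U) → Function.Injective y →
    (∀ j, ∀ u ∈ U, u ≠ w j → C s(y j, u) = false) →
    (if n ≤ p then 3 * n + min n 1 else 4 * n - p) ≤ U.card →
    ∃ g : Fin n → Finset (Fin N),
      (∀ j, IsMonoClique C false 4 (g j)) ∧
      (∀ j l, j ≠ l → Disjoint (g j) (g l)) ∧
      (∀ j, g j ⊆ U ∪ Finset.univ.image y) := by
  intro n
  induction n with
  | zero =>
    intro p U y w _ _ _ _ _
    exact ⟨Fin.elim0, fun j => j.elim0, fun j => j.elim0, fun j => j.elim0⟩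
  | succ n ih =>
    intro p U y w hU hyU hyinj hyw hcard
    match p, y, w, hyU, hyinj, hyw, hcard with
    | 0, y, w, hyU, hyinj, hyw, hcard =>
      have h4 : 4 ≤ U.card := by
        by_cases h : n + 1 ≤ 0 <;> simp [h] at hcard <;> omega
      obtain ⟨T, hTU, hT4⟩ := Finset.exists_subset_card_eq h4
      have hcard' : (if n ≤ 0 then 3 * n + min n 1 else 4 * n - 0) ≤ (U \ T).card := by
        rw [Finset.card_sdiff_of_subset hTU, hT4]
        by_cases h : n ≤ 0 <;> simp [h] at hcard ⊢ <;> omega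
      obtain ⟨g, hg1, hg2, hg3⟩ := ih 0 (U \ T) y w
        (fun u hu v hv huv => hU u (Finset.mem_sdiff.1 hu).1 v (Finset.mem_sdiff.1 hv).1 huv)
        (fun j => j.elim0) hyinj (fun j => j.elim0) hcard'
      refine ⟨Fin.cases T g, ?_, ?_, ?_⟩
      · intro j
        refine Fin.cases ?_ ?_ j
        · refine ⟨hT4, fun a ha b hb hab => hU a (hTU ha) b (hTU hb) hab⟩
        · intro i; simpa using hg1 i
      · have hTg : ∀ i, Disjoint T (g i) := by
          intro i
          rw [Finset.disjoint_right]
          intro a hag haT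
          have := hg3 i hag
          rw [Finset.mem_union] at this
          rcases this with h | h
          · exact (Finset.mem_sdiff.1 h).2 haT
          · simp at h
        intro j l hjl
        rcases Fin.eq_zero_or_eq_succ j with rfl | ⟨j', rfl⟩ <;>
          rcases Fin.eq_zero_or_eq_succ l with rfl | ⟨l', rfl⟩
        · exact absurd rfl hjl
        · simpa using hTg l'
        · simpa using (hTg j').symm
        · simp only [Fin.cases_succ]
          exact hg2 j' l' (fun h => hjl (by rw [h]))
      · intro j
        refine Fin.cases ?_ ?_ j
        · exact hTU.trans Finset.subset_union_left
        · intro i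
          refine (hg3 i).trans ?_
          exact Finset.union_subset_union Finset.sdiff_subset (by simp)
    | (p' + 1), y, w, hyU, hyinj, hyw, hcard =>
      have h4 : 4 ≤ U.card := by
        by_cases h : n + 1 ≤ p' + 1 <;> simp [h] at hcard <;> omega
      have h3 : 3 ≤ (U \ {w 0}).card := by
        have := Finset.le_card_sdiff {w 0} U
        simp at this; omega
      obtain ⟨T, hTU', hT3⟩ := Finset.exists_subset_card_eq h3
      have hTU : T ⊆ U := hTU'.trans Finset.sdiff_subset
      have hy0T : y 0 ∉ T := fun h => hyU 0 (hTU h)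
      set Q : Finset (Fin N) := insert (y 0) T with hQ
      have hQcard : Q.card = 4 := by
        rw [hQ, Finset.card_insert_of_notMem hy0T, hT3]
      have hQblue : IsMonoClique C false 4 Q := by
        refine ⟨hQcard, ?_⟩
        intro a ha b hb hab
        rw [hQ, Finset.mem_insert] at ha hb
        rcases ha with rfl | ha
        · rcases hb with rfl | hb
          · exact absurd rfl hab
          · refine hyw 0 b (hTU hb) ?_
            intro h; exact (Finset.mem_sdiff.1 (hTU' hb)).2 (by simp [h])
        · rcases hb with rfl | hb
          · rw [Sym2.eq_swap]
            refine hyw 0 a (hTU ha) ?_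
            intro h; exact (Finset.mem_sdiff.1 (hTU' ha)).2 (by simp [h])
          · exact hU a (hTU ha) b (hTU hb) hab
      have hcard' : (if n ≤ p' then 3 * n + min n 1 else 4 * n - p') ≤ (U \ T).card := by
        rw [Finset.card_sdiff_of_subset hTU, hT3]
        by_cases h : n ≤ p' <;> simp [h, Nat.add_le_add_iff_right] at hcard ⊢ <;> omega
      obtain ⟨g, hg1, hg2, hg3⟩ := ih p' (U \ T) (y ∘ Fin.succ) (w ∘ Fin.succ)
        (fun u hu v hv huv => hU u (Finset.mem_sdiff.1 hu).1 v (Finset.mem_sdiff.1 hv).1 huv)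
        (fun j h => hyU j.succ (Finset.mem_sdiff.1 h).1)
        (hyinj.comp (Fin.succ_injective p'))
        (fun j u hu => hyw j.succ u (Finset.mem_sdiff.1 hu).1)
        hcard'
      have hgQ : ∀ i, Disjoint Q (g i) := by
        intro i
        rw [Finset.disjoint_left]
        intro a haQ hag
        have hsub := hg3 i hag
        rw [Finset.mem_union] at hsub
        rw [hQ, Finset.mem_insert] at haQ
        rcases haQ with rfl | haT
        · rcases hsub with h | h
          · exact hyU 0 (Finset.mem_sdiff.1 h).1
          · obtain ⟨j, _, hj⟩ := Finset.mem_image.1 h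
            exact Fin.succ_ne_zero j (hyinj hj)
        · rcases hsub with h | h
          · exact (Finset.mem_sdiff.1 h).2 haT
          · obtain ⟨j, _, hj⟩ := Finset.mem_image.1 h
            have hja : y j.succ = a := hj
            exact hyU j.succ (hja ▸ hTU haT)
      refine ⟨Fin.cases Q g, ?_, ?_, ?_⟩
      · intro j
        refine Fin.cases hQblue (fun i => hg1 i) j
      · intro j l hjl
        rcases Fin.eq_zero_or_eq_succ j with rfl | ⟨j', rfl⟩ <;>
          rcases Fin.eq_zero_or_eq_succ l with rfl | ⟨l', rfl⟩
        · exact absurd rfl hjl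
        · simpa using hgQ l'
        · simpa using (hgQ j').symm
        · simp only [Fin.cases_succ]
          exact hg2 j' l' (fun h => hjl (by rw [h]))
      · intro j
        refine Fin.cases ?_ ?_ j
        · intro a ha
          simp only [Fin.cases_zero] at ha
          rw [Finset.mem_insert] at ha
          rcases ha with rfl | ha
          · exact Finset.mem_union_right _ (Finset.mem_image.2 ⟨0, Finset.mem_univ _, rfl⟩)
          · exact Finset.mem_union_left _ (hTU ha)
        · intro i
          refine (hg3 i).trans ?_
          refine Finset.union_subset_union Finset.sdiff_subset ?_
          intro a ha
          obtain ⟨j, _, hj⟩ := Finset.mem_image.1 ha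
          exact Finset.mem_image.2 ⟨j.succ, Finset.mem_univ _, hj⟩


open Finset

lemma lower_one (m k b : ℕ) (hm : 1 ≤ m) (hb : b ≤ 3 * k + 2 * m + 1) :
    ∃ C : Sym2 (Fin b) → Bool,
      ¬ HasMonoCliqueMatching C true m 2 ∧ ¬ HasMonoCliqueMatching C false (k + 1) 4 := by
  set C : Sym2 (Fin b) → Bool := Sym2.lift
    ⟨fun u v => decide (u.val < 2 * m - 1 ∧ v.val < 2 * m - 1), by
      intro u v; simp only [decide_eq_decide]; tauto⟩ with hC
  have hCiff : ∀ u v : Fin b, C s(u, v) = true ↔ (u.val < 2 * m - 1 ∧ v.val < 2 * m - 1) := by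
    intro u v; simp [hC]
  refine ⟨C, ?_, ?_⟩
  · rintro ⟨f, hf, hd⟩
    have hall : ∀ j, ∀ x ∈ f j, x.val < 2 * m - 1 := by
      intro j x hx
      obtain ⟨a, c, hac, hfj⟩ := Finset.card_eq_two.1 (hf j).1
      have hcol := (hf j).2 a (by rw [hfj]; simp) c (by rw [hfj]; simp) hac
      have hlt := (hCiff a c).1 hcol
      rw [hfj, Finset.mem_insert, Finset.mem_singleton] at hx
      rcases hx with rfl | rfl
      · exact hlt.1
      · exact hlt.2
    have hTcard : (Finset.univ.biUnion f).card = 2 * m := by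
      rw [Finset.card_biUnion (fun j _ l _ h => hd j l h)]
      simp [(fun j => (hf j).1), mul_comm]
    have hle : (Finset.univ.biUnion f).card ≤ (Finset.range (2 * m - 1)).card := by
      apply Finset.card_le_card_of_injOn (fun v => v.val)
      · intro a ha
        rw [Finset.mem_coe, Finset.mem_biUnion] at ha
        obtain ⟨j, _, haj⟩ := ha
        rw [Finset.mem_coe, Finset.mem_range]
        exact hall j a haj
      · intro x _ y _ h
        exact Fin.ext h
    rw [hTcard, Finset.card_range] at hle
    omega
  · rintro ⟨f, hf, hd⟩
    set B : Fin (k+1) → Finset (Fin b) := fun j => (f j).filter (fun v => ¬ v.val < 2 * m - 1)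
      with hB
    have hB3 : ∀ j, 3 ≤ (B j).card := by
      intro j
      have hsplit := Finset.card_filter_add_card_filter_not
        (s := f j) (p := fun v => v.val < 2 * m - 1)
      have h1 : ((f j).filter (fun v => v.val < 2 * m - 1)).card ≤ 1 := by
        by_contra h
        push_neg at h
        obtain ⟨u, hu, v, hv, huv⟩ := Finset.one_lt_card.1 h
        rw [Finset.mem_filter] at hu hv
        have := (hf j).2 u hu.1 v hv.1 huv
        have := (hCiff u v).2 ⟨hu.2, hv.2⟩
        simp_all
      have hc4 := (hf j).1
      have hBj : (B j).card = ((f j).filter (fun a => ¬ a.val < 2 * m - 1)).card := rfl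
      omega
    have hdisj : ∀ (j l : Fin (k+1)), j ≠ l → Disjoint (B j) (B l) := by
      intro j l h
      exact (hd j l h).mono (Finset.filter_subset _ _) (Finset.filter_subset _ _)
    have hTcard : (Finset.univ.biUnion B).card = ∑ j, (B j).card :=
      Finset.card_biUnion (fun j _ l _ h => hdisj j l h)
    have hsum : 3 * (k + 1) ≤ ∑ j, (B j).card := by
      calc 3 * (k + 1) = ∑ _j : Fin (k+1), 3 := by simp [mul_comm]
        _ ≤ ∑ j, (B j).card := Finset.sum_le_sum (fun j _ => hB3 j)
    have hle : (Finset.univ.biUnion B).card ≤ (Finset.range (3 * k + 2)).card := by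
      apply Finset.card_le_card_of_injOn (fun v => v.val - (2 * m - 1))
      · intro a ha
        rw [Finset.mem_coe, Finset.mem_biUnion] at ha
        obtain ⟨j, _, haj⟩ := ha
        rw [hB, Finset.mem_filter] at haj
        have := a.isLt
        rw [Finset.mem_coe, Finset.mem_range]
        dsimp only
        omega
      · intro x hx y hy h
        rw [Finset.mem_coe, Finset.mem_biUnion] at hx hy
        obtain ⟨j, _, hxj⟩ := hx
        obtain ⟨l, _, hyl⟩ := hy
        rw [hB, Finset.mem_filter] at hxj hyl
        have h1 := hxj.2
        have h2 := hyl.2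
        have h3 : x.val - (2 * m - 1) = y.val - (2 * m - 1) := h
        exact Fin.ext (by omega)
    rw [hTcard, Finset.card_range] at hle
    omega

lemma lower_two (m k b : ℕ) (hm : 1 ≤ m) (hb : b ≤ 4 * k + m + 2) :
    ∃ C : Sym2 (Fin b) → Bool,
      ¬ HasMonoCliqueMatching C true m 2 ∧ ¬ HasMonoCliqueMatching C false (k + 1) 4 := by
  set C : Sym2 (Fin b) → Bool := Sym2.lift
    ⟨fun u v => decide (u.val < m - 1 ∨ v.val < m - 1), by
      intro u v; simp only [decide_eq_decide]; tauto⟩ with hC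
  have hCiff : ∀ u v : Fin b, C s(u, v) = true ↔ (u.val < m - 1 ∨ v.val < m - 1) := by
    intro u v; simp [hC]
  refine ⟨C, ?_, ?_⟩
  · rintro ⟨f, hf, hd⟩
    have hpick : ∀ j, ∃ x ∈ f j, x.val < m - 1 := by
      intro j
      obtain ⟨a, c, hac, hfj⟩ := Finset.card_eq_two.1 (hf j).1
      have hcol := (hf j).2 a (by rw [hfj]; simp) c (by rw [hfj]; simp) hac
      have hlt := (hCiff a c).1 hcol
      rcases hlt with h | h
      · exact ⟨a, by rw [hfj]; simp, h⟩
      · exact ⟨c, by rw [hfj]; simp, h⟩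
    choose g hgf hglt using hpick
    have hle : (Finset.univ : Finset (Fin m)).card ≤ (Finset.range (m - 1)).card := by
      apply Finset.card_le_card_of_injOn (fun j => (g j).val)
      · intro j _
        rw [Finset.mem_coe, Finset.mem_range]
        exact hglt j
      · intro x _ y _ h
        by_contra hxy
        have := (hd x y hxy) (Finset.singleton_subset_iff.2 (hgf x))
          (Finset.singleton_subset_iff.2 (Fin.ext h ▸ hgf y))
        simp at this
    simp [Finset.card_range] at hle
    omega
  · rintro ⟨f, hf, hd⟩
    have hall : ∀ j, ∀ x ∈ f j, ¬ x.val < m - 1 := by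
      intro j x hx hlt
      obtain ⟨y, hy, hyx⟩ := Finset.exists_mem_ne (by rw [(hf j).1]; omega) x
      have := (hf j).2 x hx y hy (Ne.symm hyx)
      have := (hCiff x y).2 (Or.inl hlt)
      simp_all
    have hTcard : (Finset.univ.biUnion f).card = 4 * (k + 1) := by
      rw [Finset.card_biUnion (fun j _ l _ h => hd j l h)]
      simp [(fun j => (hf j).1), mul_comm]
    have hle : (Finset.univ.biUnion f).card ≤ (Finset.range (4 * k + 3)).card := by
      apply Finset.card_le_card_of_injOn (fun v => v.val - (m - 1))
      · intro a ha
        rw [Finset.mem_coe, Finset.mem_biUnion] at ha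
        obtain ⟨j, _, haj⟩ := ha
        have := hall j a haj
        have := a.isLt
        rw [Finset.mem_coe, Finset.mem_range]
        dsimp only
        omega
      · intro x hx y hy h
        rw [Finset.mem_coe, Finset.mem_biUnion] at hx hy
        obtain ⟨j, _, hxj⟩ := hx
        obtain ⟨l, _, hyl⟩ := hy
        have h1 := hall j x hxj
        have h2 := hall l y hyl
        have h3 : x.val - (m - 1) = y.val - (m - 1) := h
        exact Fin.ext (by omega)
    rw [hTcard, Finset.card_range] at hle
    omega


lemma pair_not_mem_disjoint {α : Type*} [DecidableEq α] {a b : α} {S : Finset α}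
    (ha : a ∉ S) (hb : b ∉ S) : Disjoint ({a, b} : Finset α) S := by
  rw [Finset.disjoint_left]
  intro x hx
  rw [Finset.mem_insert, Finset.mem_singleton] at hx
  rcases hx with rfl | rfl <;> assumption

lemma upper {N : ℕ} (m k : ℕ) (hm : 1 ≤ m) (h1 : 3 * k + 2 * m + 2 ≤ N)
    (h2 : 4 * k + m + 3 ≤ N) (C : Sym2 (Fin N) → Bool) :
    HasMonoCliqueMatching C true m 2 ∨ HasMonoCliqueMatching C false (k + 1) 4 := by
  classical
  by_cases hPm : HasMonoCliqueMatching C true m 2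
  · exact Or.inl hPm
  right
  have hP0 : HasMonoCliqueMatching C true 0 2 :=
    ⟨Fin.elim0, fun j => j.elim0, fun j => j.elim0⟩
  set s := Nat.findGreatest (fun t => HasMonoCliqueMatching C true t 2) m with hs
  have hPs : HasMonoCliqueMatching C true s 2 := by
    rw [hs]
    exact Nat.findGreatest_spec (P := fun t => HasMonoCliqueMatching C true t 2)
      (Nat.zero_le m) hP0
  have hsle : s ≤ m := by rw [hs]; exact Nat.findGreatest_le m
  have hsm : s < m := by
    rcases Nat.lt_or_ge s m with h | h
    · exact h
    · exact absurd (le_antisymm hsle h ▸ hPs) hPm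
  have hmax : ¬ HasMonoCliqueMatching C true (s + 1) 2 := by
    have := Nat.findGreatest_is_greatest (P := fun t => HasMonoCliqueMatching C true t 2)
      (n := m) (k := s + 1) (by omega) (by omega)
    exact this
  obtain ⟨f, hf, hd⟩ := hPs
  set T := Finset.univ.biUnion f with hT
  set U := (Finset.univ \ T : Finset (Fin N)) with hU
  have hUmem : ∀ u : Fin N, u ∈ U ↔ ∀ j, u ∉ f j := by
    intro u; rw [hU]; simp [hT, Finset.mem_sdiff, Finset.mem_biUnion]
  have hfU : ∀ (j : Fin s) (x : Fin N), x ∈ f j → x ∉ U :=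
    fun j x hx hU' => (hUmem x).1 hU' j hx
  have hTcard : T.card = 2 * s := by
    rw [hT, Finset.card_biUnion (fun j _ l _ h => hd j l h)]
    simp [(fun j => (hf j).1), mul_comm]
  have hTle : 2 * s ≤ N := by
    rw [← hTcard]
    calc T.card ≤ (Finset.univ : Finset (Fin N)).card := Finset.card_le_card (subset_univ T)
      _ = N := by simp
  have hUcard : U.card = N - 2 * s := by
    rw [hU, Finset.card_sdiff_of_subset (Finset.subset_univ T), hTcard]
    simp
  have hUblue : ∀ u ∈ U, ∀ v ∈ U, u ≠ v → C s(u, v) = false := by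
    intro u hu v hv huv
    by_contra hc
    simp only [Bool.not_eq_false] at hc
    apply hmax
    refine ⟨Fin.snoc f {u, v}, ?_, ?_⟩
    · intro j
      rcases Fin.eq_castSucc_or_eq_last j with ⟨j', rfl⟩ | rfl
      · rw [Fin.snoc_castSucc]; exact hf j'
      · rw [Fin.snoc_last]; exact isMonoClique_pair C true huv hc
    · intro j l hjl
      rcases Fin.eq_castSucc_or_eq_last j with ⟨j', rfl⟩ | rfl <;>
        rcases Fin.eq_castSucc_or_eq_last l with ⟨l', rfl⟩ | rfl
      · simp only [Fin.snoc_castSucc]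
        exact hd j' l' (fun h => hjl (by rw [h]))
      · simp only [Fin.snoc_castSucc, Fin.snoc_last]
        exact (pair_not_mem_disjoint (fun h => (hUmem u).1 hu j' h)
          (fun h => (hUmem v).1 hv j' h)).symm
      · simp only [Fin.snoc_castSucc, Fin.snoc_last]
        exact pair_not_mem_disjoint (fun h => (hUmem u).1 hu l' h)
          (fun h => (hUmem v).1 hv l' h)
      · exact absurd rfl hjl
  have hswap : ∀ j : Fin s, ∃ y ∈ f j, ∃ w : Fin N,
      ∀ u ∈ U, u ≠ w → C s(y, u) = false := by
    intro j
    obtain ⟨x, z, hxz, hfj⟩ := Finset.card_eq_two.1 (hf j).1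
    have hxj : x ∈ f j := by rw [hfj]; simp
    have hzj : z ∈ f j := by rw [hfj]; simp
    by_cases hex : ∃ u ∈ U, C s(x, u) = true
    · obtain ⟨u, hu, hxu⟩ := hex
      have hufl : ∀ l, u ∉ f l := (hUmem u).1 hu
      refine ⟨z, hzj, u, ?_⟩
      intro u' hu' hu'u
      by_contra hc
      simp only [Bool.not_eq_false] at hc
      have hu'fl : ∀ l, u' ∉ f l := (hUmem u').1 hu'
      have hxu_ne : x ≠ u := fun h => hufl j (h ▸ hxj)
      have hzu_ne : z ≠ u := fun h => hufl j (h ▸ hzj)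
      have hxu'_ne : x ≠ u' := fun h => hu'fl j (h ▸ hxj)
      have hzu'_ne : z ≠ u' := fun h => hu'fl j (h ▸ hzj)
      apply hmax
      refine ⟨Fin.snoc (Function.update f j {x, u}) {z, u'}, ?_, ?_⟩
      · intro i
        rcases Fin.eq_castSucc_or_eq_last i with ⟨i', rfl⟩ | rfl
        · rw [Fin.snoc_castSucc]
          by_cases hij : i' = j
          · rw [hij, Function.update_self]
            exact isMonoClique_pair C true hxu_ne hxu
          · rw [Function.update_of_ne hij]
            exact hf i'
        · rw [Fin.snoc_last]
          exact isMonoClique_pair C true hzu'_ne hc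
      · have key : ∀ i' : Fin s, Disjoint (Function.update f j {x, u} i') ({z, u'} : Finset (Fin N)) := by
          intro i'
          by_cases hij : i' = j
          · rw [hij, Function.update_self]
            refine pair_not_mem_disjoint ?_ ?_ <;>
              simp only [Finset.mem_insert, Finset.mem_singleton] <;> push_neg
            · exact ⟨hxz, hxu'_ne⟩
            · exact ⟨fun h => hzu_ne h.symm, fun h => hu'u h.symm⟩
          · rw [Function.update_of_ne hij]
            refine (pair_not_mem_disjoint ?_ ?_).symm
            · exact fun h => (Finset.disjoint_left.1 (hd j i' (fun he => hij he.symm))) hzj h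
            · exact fun h => hu'fl i' h
        intro i l hil
        rcases Fin.eq_castSucc_or_eq_last i with ⟨i', rfl⟩ | rfl <;>
          rcases Fin.eq_castSucc_or_eq_last l with ⟨l', rfl⟩ | rfl
        · simp only [Fin.snoc_castSucc]
          have hil' : i' ≠ l' := fun h => hil (by rw [h])
          by_cases hij : i' = j
          · subst hij
            rw [Function.update_self, Function.update_of_ne (fun h => hil' h.symm)]
            refine pair_not_mem_disjoint ?_ ?_
            · exact fun h => (Finset.disjoint_left.1 (hd i' l' hil')) hxj h
            · exact fun h => hufl l' h
          · rw [Function.update_of_ne hij]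
            by_cases hlj : l' = j
            · subst hlj
              rw [Function.update_self]
              refine (pair_not_mem_disjoint ?_ ?_).symm
              · exact fun h => (Finset.disjoint_left.1 (hd l' i' (fun he => hil' he.symm))) hxj h
              · exact fun h => hufl i' h
            · rw [Function.update_of_ne hlj]
              exact hd i' l' hil'
        · simp only [Fin.snoc_castSucc, Fin.snoc_last]
          exact key i'
        · simp only [Fin.snoc_castSucc, Fin.snoc_last]
          exact (key l').symm
        · exact absurd rfl hil
    · refine ⟨x, hxj, x, fun u hu _ => ?_⟩
      have hnt : ¬ C s(x, u) = true := fun h => hex ⟨u, hu, h⟩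
      simp only [Bool.not_eq_true] at hnt
      exact hnt
  choose y hyf w hyw using hswap
  have hyU : ∀ j, y j ∉ U := fun j => hfU j (y j) (hyf j)
  have hyinj : Function.Injective y := by
    intro a b hab
    by_contra hne
    exact (Finset.disjoint_left.1 (hd a b hne)) (hyf a) (hab ▸ hyf b)
  have hcond : (if k + 1 ≤ s then 3 * (k + 1) + min (k + 1) 1 else 4 * (k + 1) - s)
      ≤ U.card := by
    rw [hUcard]
    split_ifs with h <;> omega
  obtain ⟨g, hg1, hg2, -⟩ := greedy C (k + 1) s U y w hUblue hyU hyinj hyw hcond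
  exact ⟨g, hg1, hg2⟩


/-- For all `m ≥ 1` and `k ≥ 1`: `R(mK₂, (k+1)K₄) = 3k + 2m + 2` if `k < m - 1`, and
`R(mK₂, (k+1)K₄) = 4k + m + 3` if `k ≥ m - 1`; moreover the two expressions agree when
`k = m - 1`. Here `true` is red and `false` is blue: the Ramsey number is the least `N`
such that every coloring of `K_N` contains a red matching of size `m` or `k + 1` pairwise
vertex-disjoint blue copies of `K₄`. -/
theorem ramsey_matching_vs_K4s (m k : ℕ) (hm : 1 ≤ m) (hk : 1 ≤ k) :
    (k < m - 1 →
      IsLeast {N : ℕ | ∀ C : Sym2 (Fin N) → Bool,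
          HasMonoCliqueMatching C true m 2 ∨ HasMonoCliqueMatching C false (k + 1) 4}
        (3 * k + 2 * m + 2)) ∧
    (m - 1 ≤ k →
      IsLeast {N : ℕ | ∀ C : Sym2 (Fin N) → Bool,
          HasMonoCliqueMatching C true m 2 ∨ HasMonoCliqueMatching C false (k + 1) 4}
        (4 * k + m + 3)) ∧
    (k = m - 1 → 3 * k + 2 * m + 2 = 4 * k + m + 3) := by
  refine ⟨?_, ?_, fun hkm => by omega⟩
  · intro hkm
    constructor
    · exact fun C => upper m k hm (le_refl _) (by omega) C
    · intro b hb
      by_contra hlt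
      push_neg at hlt
      obtain ⟨C, hC1, hC2⟩ := lower_one m k b hm (by omega)
      rcases hb C with h | h
      · exact hC1 h
      · exact hC2 h
  · intro hkm
    constructor
    · exact fun C => upper m k hm (by omega) (le_refl _) C
    · intro b hb
      by_contra hlt
      push_neg at hlt
      obtain ⟨C, hC1, hC2⟩ := lower_two m k b hm (by omega)
      rcases hb C with h | h
      · exact hC1 h
      · exact hC2 h
end

section
/- Let n ≥ 2 and k ≥ 2 be positive integers with k ≥ 2n - 3 + ⌊(n-1)/4⌋, and let k = a₁ + a₂ + ⋯ + a_t with n - 1 ≥ a₁ ≥ a₂ ≥ ⋯ ≥ a_t ≥ 1. If it is NOT the case that both a₁ ≥ n - 2 and a₂ ≥ n - 2 with a₃ + a₄ + ⋯ + a_t < ⌈n/4⌉, then a₁, a₂, …, a_t can be partitioned into three groups such that the sum of each group is at least ⌈n/4⌉. -/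
/-- **Remark after Lemma 2.** Let `n ≥ 2` and `k ≥ 2` with `k ≥ 2n - 3 + ⌊(n-1)/4⌋`, and let
`k = a₀ + a₁ + ⋯ + a_{t-1}` with `n - 1 ≥ a₀ ≥ a₁ ≥ ⋯ ≥ a_{t-1} ≥ 1` (with `a i = 0` for
`i ≥ t`, so that missing terms are read as `0`). If it is not the case that both
`a₀ ≥ n - 2` and `a₁ ≥ n - 2` with `a₂ + a₃ + ⋯ + a_{t-1} < ⌈n/4⌉`, then the `aᵢ` can be
partitioned into three nonempty groups each of sum at least `⌈n/4⌉`. -/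
theorem partition_lemma_remark (n k t : ℕ) (hn : 2 ≤ n) (hk2 : 2 ≤ k)
    (hk : 2 * n - 3 + (n - 1) / 4 ≤ k)
    (ht : 1 ≤ t) (a : ℕ → ℕ)
    (hsum : ∑ i ∈ Finset.range t, a i = k)
    (hmono : ∀ i j, i ≤ j → j < t → a j ≤ a i)
    (hub : a 0 ≤ n - 1)
    (hlb : ∀ i, i < t → 1 ≤ a i)
    (hzero : ∀ i, t ≤ i → a i = 0)
    (hnot : ¬ (n - 2 ≤ a 0 ∧ n - 2 ≤ a 1 ∧ ∑ i ∈ Finset.Ico 2 t, a i < (n + 3) / 4)) :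
    ∃ g : ℕ → Fin 3,
      (∀ j : Fin 3, ∃ i, i < t ∧ g i = j) ∧
      ∀ j : Fin 3, (n + 3) / 4 ≤ ∑ i ∈ (Finset.range t).filter (fun i => g i = j), a i := by
  
  set q := (n+3)/4 with hqdef
  have hq1 : 1 ≤ q := by omega
  have hkq : 2*n - 4 + q ≤ k := by omega
  have ht2 : 2 ≤ t := by
    by_contra h
    have ht1 : t = 1 := by omega
    rw [ht1, Finset.sum_range_one] at hsum
    omega
  have ha1 : 1 ≤ a 1 := hlb 1 ht2
  have ha10 : a 1 ≤ a 0 := hmono 0 1 (by omega) ht2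
  by_cases hcase : n - 2 ≤ a 1
  · -- Case A: both a0, a1 ≥ n-2, so the tail sum is ≥ q
    have ha0 : n - 2 ≤ a 0 := le_trans hcase ha10
    have hrest : q ≤ ∑ i ∈ Finset.Ico 2 t, a i := by
      by_contra h
      exact hnot ⟨ha0, hcase, by omega⟩
    have ht3 : 3 ≤ t := by
      by_contra h
      have he : Finset.Ico 2 t = ∅ := Finset.Ico_eq_empty (by omega)
      rw [he, Finset.sum_empty] at hrest
      omega
    refine ⟨fun i => if i = 0 then 0 else if i = 1 then 1 else 2, ?_, ?_⟩
    · intro j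
      fin_cases j
      · exact ⟨0, by omega, by decide⟩
      · exact ⟨1, by omega, by decide⟩
      · exact ⟨2, by omega, by decide⟩
    · have hg0 : ∀ i : ℕ, ((if i = 0 then (0:Fin 3) else if i = 1 then 1 else 2) = 0 ↔ i = 0) := by
        intro i
        split_ifs with h1 h2
        · exact iff_of_true rfl h1
        · exact iff_of_false (by decide) h1
        · exact iff_of_false (by decide) h1
      have hg1 : ∀ i : ℕ, ((if i = 0 then (0:Fin 3) else if i = 1 then 1 else 2) = 1 ↔ i = 1) := by
        intro i
        split_ifs with h1 h2
        · exact iff_of_false (by decide) (by omega)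
        · exact iff_of_true rfl h2
        · exact iff_of_false (by decide) h2
      have hg2 : ∀ i : ℕ, ((if i = 0 then (0:Fin 3) else if i = 1 then 1 else 2) = 2 ↔ 2 ≤ i) := by
        intro i
        split_ifs with h1 h2
        · exact iff_of_false (by decide) (by omega)
        · exact iff_of_false (by decide) (by omega)
        · exact iff_of_true rfl (by omega)
      intro j
      fin_cases j
      · have hf : (Finset.range t).filter
            (fun i => (if i = 0 then (0:Fin 3) else if i = 1 then 1 else 2) = 0) = {0} := by
          ext i
          simp only [Finset.mem_filter, Finset.mem_range, Finset.mem_singleton, hg0]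
          omega
        show q ≤ ∑ i ∈ (Finset.range t).filter
            (fun i => (if i = 0 then (0:Fin 3) else if i = 1 then 1 else 2) = 0), a i
        rw [hf, Finset.sum_singleton]
        omega
      · have hf : (Finset.range t).filter
            (fun i => (if i = 0 then (0:Fin 3) else if i = 1 then 1 else 2) = 1) = {1} := by
          ext i
          simp only [Finset.mem_filter, Finset.mem_range, Finset.mem_singleton, hg1]
          omega
        show q ≤ ∑ i ∈ (Finset.range t).filter
            (fun i => (if i = 0 then (0:Fin 3) else if i = 1 then 1 else 2) = 1), a i
        rw [hf, Finset.sum_singleton]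
        omega
      · have hf : (Finset.range t).filter
            (fun i => (if i = 0 then (0:Fin 3) else if i = 1 then 1 else 2) = 2) = Finset.Ico 2 t := by
          ext i
          simp only [Finset.mem_filter, Finset.mem_range, Finset.mem_Ico, hg2]
          omega
        show q ≤ ∑ i ∈ (Finset.range t).filter
            (fun i => (if i = 0 then (0:Fin 3) else if i = 1 then 1 else 2) = 2), a i
        rw [hf]
        exact hrest
  · -- Case B: a 1 < n - 2, hence a 1 ≤ n - 3 and n ≥ 4
    push_neg at hcase
    have hn4 : 4 ≤ n := by omega
    set s : ℕ → ℕ := fun j => ∑ i ∈ Finset.range j, a i with hsdef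
    have hst : s t = k := hsum
    have hssucc : ∀ j, s (j+1) = s j + a j := fun j => Finset.sum_range_succ a j
    have hs1 : s 1 = a 0 := Finset.sum_range_one a
    have hex1 : ∃ j, q ≤ s j := ⟨t, by rw [hst]; omega⟩
    set p := Nat.find hex1 with hpdef
    have hp_spec : q ≤ s p := Nat.find_spec hex1
    have hpt : p ≤ t := Nat.find_le (by rw [hst]; omega)
    have hs0 : s 0 = 0 := Finset.sum_range_zero a
    have hp1 : 1 ≤ p := by
      rcases Nat.eq_zero_or_pos p with h | h
      · rw [h] at hp_spec; omega
      · exact h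
    have hprev : s (p-1) < q := by
      have h := Nat.find_min hex1 (show p - 1 < p by omega)
      omega
    have hpeq : s p = s (p-1) + a (p-1) := by
      have h := hssucc (p-1)
      rw [Nat.sub_add_cancel hp1] at h
      exact h
    -- bound on the first group: s p = a 0 (if p = 1) or s p ≤ 2q - 2 (if p ≥ 2)
    have hsp_b : s p = a 0 ∨ s p ≤ 2*q - 2 := by
      rcases Nat.lt_or_ge p 2 with h2 | h2
      · left
        have hp1' : p = 1 := by omega
        rw [hp1', hs1]
      · right
        have ha0q : a 0 < q := by
          have h := Nat.find_min hex1 (show 1 < p by omega)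
          omega
        have hap : a (p-1) ≤ a 0 := hmono 0 (p-1) (by omega) (by omega)
        omega
    have hsp : s p ≤ 2*n - 4 := by omega
    have hex2 : ∃ j, s p + q ≤ s j := ⟨t, by rw [hst]; omega⟩
    set p' := Nat.find hex2 with hp'def
    have hp'_spec : s p + q ≤ s p' := Nat.find_spec hex2
    have hp't : p' ≤ t := Nat.find_le (by rw [hst]; omega)
    have hpp' : p < p' := by
      by_contra h
      push_neg at h
      have hmono_s : s p' ≤ s p := Finset.sum_le_sum_of_subset (Finset.range_subset_range.mpr h)
      omega
    have hprev' : s (p'-1) < s p + q := by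
      have h := Nat.find_min hex2 (show p' - 1 < p' by omega)
      omega
    have hp'eq : s p' = s (p'-1) + a (p'-1) := by
      have h := hssucc (p'-1)
      rw [Nat.sub_add_cancel (by omega : 1 ≤ p')] at h
      exact h
    have hap1 : a p ≤ a 1 := hmono 1 p hp1 (by omega)
    -- bound on the second group
    have hsum2_b : s p' ≤ s p + a 1 ∨ s p' ≤ s p + 2*q - 2 := by
      rcases Nat.lt_or_ge p' (p+2) with h2 | h2
      · left
        have hp'eq2 : p' = p + 1 := by omega
        rw [hp'eq2, hssucc p]
        omega
      · right
        have hapq : a p < q := by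
          have h := Nat.find_min hex2 (show p + 1 < p' by omega)
          have h3 := hssucc p
          omega
        have hap' : a (p'-1) ≤ a p := hmono p (p'-1) (by omega) (by omega)
        omega
    have ha1n : a 1 ≤ n - 3 := by omega
    have hsp' : s p' ≤ 2*n - 4 := by omega
    have hs3 : s p' + q ≤ k := by omega
    have hp'lt : p' < t := by
      by_contra h
      push_neg at h
      have he : p' = t := by omega
      rw [he, hst] at hs3
      omega
    have hplt : p < t := by omega
    refine ⟨fun i => if i < p then 0 else if i < p' then 1 else 2, ?_, ?_⟩
    · intro j
      fin_cases j
      · refine ⟨0, by omega, ?_⟩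
        show (if 0 < p then (0:Fin 3) else if 0 < p' then 1 else 2) = 0
        rw [if_pos (show 0 < p by omega)]
      · refine ⟨p, hplt, ?_⟩
        show (if p < p then (0:Fin 3) else if p < p' then 1 else 2) = 1
        rw [if_neg (by omega), if_pos hpp']
      · refine ⟨p', hp'lt, ?_⟩
        show (if p' < p then (0:Fin 3) else if p' < p' then 1 else 2) = 2
        rw [if_neg (by omega), if_neg (by omega)]
    · have hg0 : ∀ i : ℕ, ((if i < p then (0:Fin 3) else if i < p' then 1 else 2) = 0 ↔ i < p) := by
        intro i
        split_ifs with h1 h2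
        · exact iff_of_true rfl h1
        · exact iff_of_false (by decide) h1
        · exact iff_of_false (by decide) h1
      have hg1 : ∀ i : ℕ, ((if i < p then (0:Fin 3) else if i < p' then 1 else 2) = 1 ↔ p ≤ i ∧ i < p') := by
        intro i
        split_ifs with h1 h2
        · exact iff_of_false (by decide) (by omega)
        · exact iff_of_true rfl (by omega)
        · exact iff_of_false (by decide) (by omega)
      have hg2 : ∀ i : ℕ, ((if i < p then (0:Fin 3) else if i < p' then 1 else 2) = 2 ↔ p' ≤ i) := by
        intro i
        split_ifs with h1 h2
        · exact iff_of_false (by decide) (by omega)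
        · exact iff_of_false (by decide) (by omega)
        · exact iff_of_true rfl (by omega)
      have hA1 : s p + ∑ i ∈ Finset.Ico p p', a i = s p' := by
        simp only [hsdef, Finset.range_eq_Ico]
        exact Finset.sum_Ico_consecutive a (Nat.zero_le p) (le_of_lt hpp')
      have hA2 : s p' + ∑ i ∈ Finset.Ico p' t, a i = k := by
        rw [← hst]
        simp only [hsdef, Finset.range_eq_Ico]
        exact Finset.sum_Ico_consecutive a (Nat.zero_le p') hp't
      intro j
      fin_cases j
      · have hf : (Finset.range t).filter
            (fun i => (if i < p then (0:Fin 3) else if i < p' then 1 else 2) = 0) = Finset.range p := by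
          ext i
          simp only [Finset.mem_filter, Finset.mem_range, hg0]
          omega
        show q ≤ ∑ i ∈ (Finset.range t).filter
            (fun i => (if i < p then (0:Fin 3) else if i < p' then 1 else 2) = 0), a i
        rw [hf]
        exact hp_spec
      · have hf : (Finset.range t).filter
            (fun i => (if i < p then (0:Fin 3) else if i < p' then 1 else 2) = 1) = Finset.Ico p p' := by
          ext i
          simp only [Finset.mem_filter, Finset.mem_range, Finset.mem_Ico, hg1]
          omega
        show q ≤ ∑ i ∈ (Finset.range t).filter
            (fun i => (if i < p then (0:Fin 3) else if i < p' then 1 else 2) = 1), a i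
        rw [hf]
        omega
      · have hf : (Finset.range t).filter
            (fun i => (if i < p then (0:Fin 3) else if i < p' then 1 else 2) = 2) = Finset.Ico p' t := by
          ext i
          simp only [Finset.mem_filter, Finset.mem_range, Finset.mem_Ico, hg2]
          omega
        show q ≤ ∑ i ∈ (Finset.range t).filter
            (fun i => (if i < p then (0:Fin 3) else if i < p' then 1 else 2) = 2), a i
        rw [hf]
        omega
end
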